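/- arXiv:1110.4253 — 5 statements merged into one kernel-verified Lean document; each statement's English description precedes it below -/
import Mathlib

section
/- Let (a_n)_{n=1}^∞ be a sequence of scalars with L := Σ_{n=1}^∞ |a_n|² (log₂(n+1))² < ∞. Then for every orthonormal system (φ_n)_{n=1}^∞ in L₂(X, dμ; H), choosing strongly measurable representatives of the φ_n, the orthogonal series Σ_{n=1}^∞ a_n φ_n(x) converges in the norm of H for μ-almost every x ∈ X. -/
open MeasureTheory Filter
open scoped ENNReal NNReal BigOperators

section MRaux

variable {X : Type*} [MeasurableSpace X] {μ : Measure X}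

private lemma mr_coeFn_sum {E : Type*} [NormedAddCommGroup E] {ι : Type*} (s : Finset ι)
    (f : ι → Lp E 2 μ) :
    ⇑(∑ i ∈ s, f i) =ᵐ[μ] fun x => ∑ i ∈ s, f i x := by
  classical
  refine Finset.cons_induction_on s ?_ ?_
  · simp only [Finset.sum_empty]
    filter_upwards [Lp.coeFn_zero (E := E) (p := 2) (μ := μ)] with x hx
    simpa using hx
  · intro a t ha ih
    simp only [Finset.sum_cons]
    filter_upwards [Lp.coeFn_add (f a) (∑ i ∈ t, f i), ih] with x hx1 hx2
    rw [hx1, Pi.add_apply, hx2]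

private lemma mr_integral_norm_sq (𝕜 : Type*) [RCLike 𝕜] {E : Type*} [NormedAddCommGroup E]
    [InnerProductSpace 𝕜 E] (u : Lp E 2 μ) :
    Integrable (fun x => ‖u x‖ ^ 2) μ ∧ ∫ x, ‖u x‖ ^ 2 ∂μ = ‖u‖ ^ 2 := by
  have hint : Integrable (fun x => (inner 𝕜 (u x) (u x) : 𝕜)) μ := L2.integrable_inner u u
  have h1 : Integrable (fun x => ‖u x‖ ^ 2) μ := by
    refine hint.re.congr (Eventually.of_forall fun x => ?_)
    exact inner_self_eq_norm_sq (𝕜 := 𝕜) (u x)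
  refine ⟨h1, ?_⟩
  have h2 : (‖u‖ : ℝ) ^ 2 = RCLike.re (inner 𝕜 u u : 𝕜) := (inner_self_eq_norm_sq (𝕜 := 𝕜) u).symm
  rw [h2, L2.inner_def, ← integral_re hint]
  refine integral_congr_ae (Eventually.of_forall fun x => ?_)
  exact (inner_self_eq_norm_sq (𝕜 := 𝕜) (u x)).symm

private lemma mr_norm_sum_sq (𝕜 : Type*) [RCLike 𝕜] {E : Type*} [NormedAddCommGroup E]
    [InnerProductSpace 𝕜 E] {ι : Type*} (s : Finset ι) (v : ι → E)
    (h : ∀ i ∈ s, ∀ j ∈ s, i ≠ j → (inner 𝕜 (v i) (v j) : 𝕜) = 0) :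
    ‖∑ i ∈ s, v i‖ ^ 2 = ∑ i ∈ s, ‖v i‖ ^ 2 := by
  have key : (inner 𝕜 (∑ i ∈ s, v i) (∑ j ∈ s, v j) : 𝕜) = ∑ i ∈ s, inner 𝕜 (v i) (v i) := by
    rw [sum_inner]
    refine Finset.sum_congr rfl fun i hi => ?_
    rw [inner_sum]
    exact Finset.sum_eq_single_of_mem i hi fun j hj hji => h i hi j hj (Ne.symm hji)
  calc ‖∑ i ∈ s, v i‖ ^ 2 = RCLike.re (inner 𝕜 (∑ i ∈ s, v i) (∑ j ∈ s, v j) : 𝕜) :=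
        (inner_self_eq_norm_sq _).symm
    _ = ∑ i ∈ s, RCLike.re (inner 𝕜 (v i) (v i) : 𝕜) := by rw [key, map_sum]
    _ = ∑ i ∈ s, ‖v i‖ ^ 2 := Finset.sum_congr rfl fun i _ => inner_self_eq_norm_sq _

private lemma mr_norm_sum_sq_le {ι : Type*} {F : Type*} [SeminormedAddCommGroup F]
    (s : Finset ι) (v : ι → F) :
    ‖∑ i ∈ s, v i‖ ^ 2 ≤ (s.card : ℝ) * ∑ i ∈ s, ‖v i‖ ^ 2 := by
  calc ‖∑ i ∈ s, v i‖ ^ 2 ≤ (∑ i ∈ s, ‖v i‖) ^ 2 := by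
        have := norm_sum_le s v
        nlinarith [norm_nonneg (∑ i ∈ s, v i), Finset.sum_nonneg (fun i (_ : i ∈ s) => norm_nonneg (v i))]
    _ = (∑ i ∈ s, 1 * ‖v i‖) ^ 2 := by simp
    _ ≤ (∑ i ∈ s, (1:ℝ) ^ 2) * ∑ i ∈ s, ‖v i‖ ^ 2 := Finset.sum_mul_sq_le_sq_mul_sq s _ _
    _ = (s.card : ℝ) * ∑ i ∈ s, ‖v i‖ ^ 2 := by simp

private lemma mr_sum_blocks (g : ℕ → ℝ) (A d Q : ℕ) :
    ∑ q ∈ Finset.range Q, ∑ n ∈ Finset.Ioc (A + q * d) (A + (q + 1) * d), g n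
      = ∑ n ∈ Finset.Ioc A (A + Q * d), g n := by
  induction Q with
  | zero => simp
  | succ Q ih =>
      rw [Finset.sum_range_succ, ih,
        Finset.sum_Ioc_consecutive g (Nat.le_add_right A (Q * d))
          (by have : Q * d ≤ (Q + 1) * d := Nat.mul_le_mul_right d (Nat.le_succ Q); omega)]

private lemma mr_sum_Ioc_eq (v : ℕ → ℝ) (N u : ℕ) :
    ∑ n ∈ Finset.Ioc N u, v n = ∑ i ∈ Finset.range (u - N), v (i + (N + 1)) := by
  rw [← Finset.Ico_add_one_add_one_eq_Ioc, Finset.sum_Ico_eq_sum_range]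
  have h : u + 1 - (N + 1) = u - N := by omega
  rw [h]
  exact Finset.sum_congr rfl fun i _ => by rw [add_comm]

end MRaux
set_option maxHeartbeats 1000000 in
/-- General Menshov–Rademacher theorem: a.e. convergence of the orthogonal series. -/
theorem menshov_rademacher_ae_convergence
    {X : Type*} [MeasurableSpace X] (μ : Measure X)
    {𝕜 : Type*} [RCLike 𝕜]
    {H : Type*} [NormedAddCommGroup H] [InnerProductSpace 𝕜 H] [CompleteSpace H]
    (a : ℕ → 𝕜) (φ : ℕ → X → H)
    (hmem : ∀ n, 1 ≤ n → MemLp (φ n) 2 μ)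
    (horth : ∀ n m, 1 ≤ n → 1 ≤ m →
      ∫ x, (inner 𝕜 (φ n x) (φ m x) : 𝕜) ∂μ = if n = m then (1 : 𝕜) else 0)
    (hL : Summable fun n : ℕ => ‖a (n + 1)‖ ^ 2 * (Real.logb 2 ((n : ℝ) + 2)) ^ 2) :
    ∀ᵐ x ∂μ, ∃ l : H,
      Tendsto (fun m : ℕ => ∑ n ∈ Finset.Icc 1 m, a n • φ n x) atTop (nhds l) := by
  classical
  -- weights
  set w : ℕ → ℝ := fun n => ‖a n‖ ^ 2 with hw_def
  set W : ℕ → ℝ := fun n => ‖a n‖ ^ 2 * (Real.logb 2 ((n : ℝ) + 1)) ^ 2 with hW_def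
  have hw_nonneg : ∀ n, 0 ≤ w n := fun n => sq_nonneg _
  have hW_nonneg : ∀ n, 0 ≤ W n := fun n => mul_nonneg (sq_nonneg _) (sq_nonneg _)
  have hLW : Summable fun n : ℕ => W (n + 1) := by
    refine hL.congr fun n => ?_
    simp only [hW_def]
    push_cast
    ring_nf
  -- log facts
  have hlog : ∀ (k n : ℕ), 2 ^ k < n → (k : ℝ) ≤ Real.logb 2 ((n : ℝ) + 1) := by
    intro k n hn
    refine (Real.le_logb_iff_rpow_le one_lt_two (by positivity)).2 ?_
    rw [Real.rpow_natCast]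
    have h1 : ((2:ℕ) ^ k : ℝ) ≤ (n : ℝ) := by exact_mod_cast Nat.cast_le.2 hn.le
    push_cast at h1 ⊢
    linarith
  have hone_le_log : ∀ n : ℕ, 1 ≤ n → 1 ≤ Real.logb 2 ((n : ℝ) + 1) := by
    intro n hn
    have h2 : (2:ℝ) ≤ (n : ℝ) + 1 := by exact_mod_cast Nat.succ_le_succ hn
    calc (1:ℝ) = Real.logb 2 2 := (Real.logb_self_eq_one one_lt_two).symm
      _ ≤ Real.logb 2 ((n:ℝ) + 1) := (Real.logb_le_logb one_lt_two two_pos (by positivity)).2 h2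
  have hwW : ∀ n, 1 ≤ n → w n ≤ W n := by
    intro n hn
    have h1 := hone_le_log n hn
    have h2 : (1:ℝ) ≤ (Real.logb 2 ((n:ℝ)+1)) ^ 2 := by nlinarith
    have := hw_nonneg n
    simp only [hw_def, hW_def] at *
    nlinarith
  have hsum_w' : Summable w := by
    rw [← summable_nat_add_iff 1]
    exact hLW.of_nonneg_of_le (fun n => hw_nonneg _)
      (fun n => hwW (n + 1) (Nat.succ_le_succ (Nat.zero_le n)))
  -- the functions
  set f : ℕ → X → H := fun n x => a n • φ n x with hf_def
  have hf_mem : ∀ n, 1 ≤ n → MemLp (f n) 2 μ := fun n hn => (hmem n hn).const_smul (a n)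
  have hf_aesm : ∀ n, 1 ≤ n → AEStronglyMeasurable (f n) μ :=
    fun n hn => (hf_mem n hn).aestronglyMeasurable
  have hs_mem : ∀ s : Finset ℕ, (∀ n ∈ s, 1 ≤ n) → MemLp (fun x => ∑ n ∈ s, f n x) 2 μ :=
    fun s hs => memLp_finset_sum s fun i hi => hf_mem i (hs i hi)
  set Fn : ℕ → Lp H 2 μ :=
    fun n => if h : 1 ≤ n then MemLp.toLp (f n) (hf_mem n h) else 0 with hFn_def
  have hFn_coe : ∀ n, 1 ≤ n → (Fn n : X → H) =ᵐ[μ] f n := by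
    intro n hn
    simp only [hFn_def, dif_pos hn]
    exact MemLp.coeFn_toLp _
  -- inner products
  have hf_inner : ∀ n m, 1 ≤ n → 1 ≤ m →
      ∫ x, (inner 𝕜 (f n x) (f m x) : 𝕜) ∂μ
        = if n = m then ((‖a n‖ : 𝕜) ^ 2) else 0 := by
    intro n m hn hm
    have hpt : ∀ x, (inner 𝕜 (f n x) (f m x) : 𝕜)
        = (starRingEnd 𝕜) (a n) * a m * inner 𝕜 (φ n x) (φ m x) := by
      intro x
      simp only [hf_def, inner_smul_left, inner_smul_right]
      ring
    simp only [hpt]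
    rw [integral_const_mul, horth n m hn hm]
    by_cases h : n = m
    · subst h
      simp [RCLike.conj_mul]
    · simp [h]
  have hinner_int : ∀ n m, 1 ≤ n → 1 ≤ m →
      Integrable (fun x => (inner 𝕜 (f n x) (f m x) : 𝕜)) μ := by
    intro n m hn hm
    have h := L2.integrable_inner (𝕜 := 𝕜)
      (MemLp.toLp (f n) (hf_mem n hn)) (MemLp.toLp (f m) (hf_mem m hm))
    refine h.congr ?_
    filter_upwards [MemLp.coeFn_toLp (hf_mem n hn), MemLp.coeFn_toLp (hf_mem m hm)] with x h1 h2
    rw [h1, h2]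
  have hFn_inner : ∀ n m, 1 ≤ n → 1 ≤ m →
      (inner 𝕜 (Fn n) (Fn m) : 𝕜) = if n = m then ((‖a n‖ : 𝕜) ^ 2) else 0 := by
    intro n m hn hm
    rw [L2.inner_def, ← hf_inner n m hn hm]
    refine integral_congr_ae ?_
    filter_upwards [hFn_coe n hn, hFn_coe m hm] with x h1 h2
    rw [h1, h2]
  -- Pythagoras for sums of Fn
  have hFn_norm_sum : ∀ s : Finset ℕ, (∀ n ∈ s, 1 ≤ n) →
      ‖∑ n ∈ s, Fn n‖ ^ 2 = ∑ n ∈ s, w n := by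
    intro s hs
    rw [mr_norm_sum_sq 𝕜 s Fn (fun i hi j hj hij => by
      rw [hFn_inner i j (hs i hi) (hs j hj)]; simp [hij])]
    refine Finset.sum_congr rfl fun i hi => ?_
    have h1 : ‖Fn i‖ ^ 2 = RCLike.re (inner 𝕜 (Fn i) (Fn i) : 𝕜) := (inner_self_eq_norm_sq _).symm
    rw [h1, hFn_inner i i (hs i hi) (hs i hi)]
    rw [if_pos rfl, ← RCLike.ofReal_pow, RCLike.ofReal_re]
  -- integral of squared norm of block sums
  have hblock : ∀ s : Finset ℕ, (∀ n ∈ s, 1 ≤ n) →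
      Integrable (fun x => ‖∑ n ∈ s, f n x‖ ^ 2) μ ∧
        ∫ x, ‖∑ n ∈ s, f n x‖ ^ 2 ∂μ = ∑ n ∈ s, w n := by
    intro s hs
    have hcoe : ((∑ n ∈ s, Fn n : Lp H 2 μ) : X → H) =ᵐ[μ] fun x => ∑ n ∈ s, f n x := by
      refine (mr_coeFn_sum s Fn).trans ?_
      have hall : ∀ᵐ x ∂μ, ∀ n, 1 ≤ n → Fn n x = f n x := by
        rw [MeasureTheory.ae_all_iff]
        intro n
        by_cases hn : 1 ≤ n
        · filter_upwards [hFn_coe n hn] with x hx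
          intro _; exact hx
        · exact Eventually.of_forall fun x h => absurd h hn
      filter_upwards [hall] with x hx
      exact Finset.sum_congr rfl fun n hn => hx n (hs n hn)
    obtain ⟨hint, heq⟩ := mr_integral_norm_sq 𝕜 (∑ n ∈ s, Fn n)
    have h2 : (fun x => ‖(∑ n ∈ s, Fn n : Lp H 2 μ) x‖ ^ 2)
        =ᵐ[μ] fun x => ‖∑ n ∈ s, f n x‖ ^ 2 := by
      filter_upwards [hcoe] with x hx; rw [hx]
    exact ⟨hint.congr h2, by rw [← integral_congr_ae h2, heq, hFn_norm_sum s hs]⟩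
  -- partial sums
  set T : ℕ → Lp H 2 μ := fun m => ∑ n ∈ Finset.Ioc 0 m, Fn n with hT_def
  set P : ℕ → X → H := fun m x => ∑ n ∈ Finset.Ioc 0 m, f n x with hP_def
  have hT_coe : ∀ m, (T m : X → H) =ᵐ[μ] P m := by
    intro m
    refine (mr_coeFn_sum _ Fn).trans ?_
    have hall : ∀ᵐ x ∂μ, ∀ n, 1 ≤ n → Fn n x = f n x := by
      rw [MeasureTheory.ae_all_iff]
      intro n
      by_cases hn : 1 ≤ n
      · filter_upwards [hFn_coe n hn] with x hx; intro _; exact hx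
      · exact Eventually.of_forall fun x h => absurd h hn
    filter_upwards [hall] with x hx
    exact Finset.sum_congr rfl fun n hn => hx n (Finset.mem_Ioc.1 hn).1
  -- tails
  set tail : ℕ → ℝ := fun m => ∑' i, w (i + (m + 1)) with htail_def
  have htail_summable : ∀ m : ℕ, Summable fun i => w (i + (m + 1)) :=
    fun m => (summable_nat_add_iff (m + 1)).2 hsum_w'
  have htail_nonneg : ∀ m, 0 ≤ tail m :=
    fun m => tsum_nonneg fun i => hw_nonneg _
  have hsum_le_tail : ∀ N l u, N ≤ l → ∑ n ∈ Finset.Ioc l u, w n ≤ tail N := by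
    intro N l u hNl
    have h1 : ∑ n ∈ Finset.Ioc l u, w n ≤ ∑ n ∈ Finset.Ioc N (max u N), w n := by
      refine Finset.sum_le_sum_of_subset_of_nonneg ?_ fun n _ _ => hw_nonneg n
      intro n hn
      rw [Finset.mem_Ioc] at *
      omega
    rw [mr_sum_Ioc_eq w N (max u N)] at h1
    exact h1.trans (Summable.sum_le_tsum _ (fun i _ => hw_nonneg _) (htail_summable N))
  have htail_mono : ∀ N l, N ≤ l → tail l ≤ tail N := by
    intro N l h
    have hs : Summable fun i => w (i + (N + 1)) := htail_summable N
    have key := Summable.sum_add_tsum_nat_add (f := fun i => w (i + (N + 1))) (l - N) hs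
    have harg : ∀ i : ℕ, i + (l - N) + (N + 1) = i + (l + 1) := by intro i; omega
    simp only [harg] at key
    have hpart : 0 ≤ ∑ i ∈ Finset.range (l - N), w (i + (N + 1)) :=
      Finset.sum_nonneg fun i _ => hw_nonneg _
    simp only [htail_def]
    linarith [key]
  -- the L² limit
  have hTdiff : ∀ l m : ℕ, l ≤ m → ‖T m - T l‖ ^ 2 = ∑ n ∈ Finset.Ioc l m, w n := by
    intro l m h
    have h2 := Finset.sum_Ioc_consecutive Fn (Nat.zero_le l) h
    have h3 : T m - T l = ∑ n ∈ Finset.Ioc l m, Fn n := by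
      simp only [hT_def]
      rw [← h2]
      abel
    rw [h3, hFn_norm_sum _ (fun n hn => by have := (Finset.mem_Ioc.1 hn).1; omega)]
  have hTcauchy : CauchySeq T := by
    refine cauchySeq_of_le_tendsto_0 (fun N => Real.sqrt (tail N)) ?_ ?_
    · intro n m N hn hm
      rcases le_total n m with h | h
      · rw [dist_eq_norm, ← norm_neg, neg_sub]
        rw [Real.le_sqrt (norm_nonneg _) (htail_nonneg _)]
        calc ‖T m - T n‖ ^ 2 = ∑ i ∈ Finset.Ioc n m, w i := hTdiff n m h
          _ ≤ tail N := hsum_le_tail N n m hn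
      · rw [dist_eq_norm]
        rw [Real.le_sqrt (norm_nonneg _) (htail_nonneg _)]
        calc ‖T n - T m‖ ^ 2 = ∑ i ∈ Finset.Ioc m n, w i := hTdiff m n h
          _ ≤ tail N := hsum_le_tail N m n hm
    · have h1 : Tendsto tail atTop (nhds 0) := by
        have h2 := tendsto_sum_nat_add w
        have h3 : Tendsto (fun m : ℕ => m + 1) atTop atTop := tendsto_add_atTop_nat 1
        exact (h2.comp h3)
      have := (Real.continuous_sqrt.tendsto' 0 0 (by simp)).comp h1
      exact this
  obtain ⟨G, hG⟩ := cauchySeq_tendsto_of_complete hTcauchy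
  have hGbound : ∀ l, ‖G - T l‖ ^ 2 ≤ tail l := by
    intro l
    have h1 : Tendsto (fun m => ‖T m - T l‖) atTop (nhds ‖G - T l‖) :=
      ((hG.sub tendsto_const_nhds).norm)
    have h2 : ∀ᶠ m in atTop, ‖T m - T l‖ ≤ Real.sqrt (tail l) := by
      rw [eventually_atTop]
      refine ⟨l, fun m hm => ?_⟩
      rw [Real.le_sqrt (norm_nonneg _) (htail_nonneg _)]
      calc ‖T m - T l‖ ^ 2 = ∑ i ∈ Finset.Ioc l m, w i := hTdiff l m hm
        _ ≤ tail l := hsum_le_tail l l m le_rfl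
    have h3 := le_of_tendsto h1 h2
    calc ‖G - T l‖ ^ 2 ≤ Real.sqrt (tail l) ^ 2 := by nlinarith [norm_nonneg (G - T l), Real.sqrt_nonneg (tail l)]
      _ = tail l := Real.sq_sqrt (htail_nonneg l)
  
  -- Step 3: integrals for the dyadic subsequence
  have hsum_W' : Summable W := (summable_nat_add_iff 1).1 hLW
  have hq : ∀ k : ℕ, Integrable (fun x => ‖P (2 ^ k) x - G x‖ ^ 2) μ ∧
      ∫ x, ‖P (2 ^ k) x - G x‖ ^ 2 ∂μ ≤ tail (2 ^ k) := by
    intro k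
    obtain ⟨hint, heq⟩ := mr_integral_norm_sq 𝕜 (T (2 ^ k) - G)
    have hcoe : (fun x => ‖(T (2 ^ k) - G : Lp H 2 μ) x‖ ^ 2)
        =ᵐ[μ] fun x => ‖P (2 ^ k) x - G x‖ ^ 2 := by
      filter_upwards [Lp.coeFn_sub (T (2 ^ k)) G, hT_coe (2 ^ k)] with x h1 h2
      rw [h1, Pi.sub_apply, h2]
    refine ⟨hint.congr hcoe, ?_⟩
    rw [← integral_congr_ae hcoe, heq]
    calc ‖T (2 ^ k) - G‖ ^ 2 = ‖G - T (2 ^ k)‖ ^ 2 := by rw [norm_sub_rev]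
      _ ≤ tail (2 ^ k) := hGbound _
  -- Step 4: dyadic block functions
  set Fk : ℕ → X → ℝ := fun k x => ∑ j ∈ Finset.range (k + 1), ∑ q ∈ Finset.range (2 ^ (k - j)),
      ‖∑ n ∈ Finset.Ioc (2 ^ k + q * 2 ^ j) (2 ^ k + (q + 1) * 2 ^ j), f n x‖ ^ 2 with hFk_def
  have hB_ge : ∀ k j q : ℕ, ∀ n ∈ Finset.Ioc (2 ^ k + q * 2 ^ j) (2 ^ k + (q + 1) * 2 ^ j),
      1 ≤ n := by
    intro k j q n hn
    exact lt_of_le_of_lt (Nat.zero_le _) (Finset.mem_Ioc.1 hn).1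
  have hFk_nonneg : ∀ k x, 0 ≤ Fk k x := by
    intro k x
    exact Finset.sum_nonneg fun j _ => Finset.sum_nonneg fun q _ => sq_nonneg _
  have hFk_int : ∀ k, Integrable (Fk k) μ := by
    intro k
    exact integrable_finset_sum _ fun j _ => integrable_finset_sum _ fun q _ =>
      (hblock _ (hB_ge k j q)).1
  set σ : ℕ → ℝ := fun k => ∑ n ∈ Finset.Ioc (2 ^ k) (2 ^ (k + 1)), w n with hσ_def
  have hσ_nonneg : ∀ k, 0 ≤ σ k := fun k => Finset.sum_nonneg fun n _ => hw_nonneg n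
  have hFk_val : ∀ k, ∫ x, Fk k x ∂μ = ((k : ℝ) + 1) * σ k := by
    intro k
    simp only [hFk_def]
    rw [integral_finset_sum _ fun j _ => integrable_finset_sum _ fun q _ =>
      (hblock _ (hB_ge k j q)).1]
    have hj : ∀ j ∈ Finset.range (k + 1),
        ∫ x, (∑ q ∈ Finset.range (2 ^ (k - j)),
          ‖∑ n ∈ Finset.Ioc (2 ^ k + q * 2 ^ j) (2 ^ k + (q + 1) * 2 ^ j), f n x‖ ^ 2) ∂μ
          = σ k := by
      intro j hjm
      rw [integral_finset_sum _ fun q _ => (hblock _ (hB_ge k j q)).1]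
      have h1 : ∀ q ∈ Finset.range (2 ^ (k - j)),
          ∫ x, ‖∑ n ∈ Finset.Ioc (2 ^ k + q * 2 ^ j) (2 ^ k + (q + 1) * 2 ^ j), f n x‖ ^ 2 ∂μ
            = ∑ n ∈ Finset.Ioc (2 ^ k + q * 2 ^ j) (2 ^ k + (q + 1) * 2 ^ j), w n :=
        fun q _ => (hblock _ (hB_ge k j q)).2
      rw [Finset.sum_congr rfl h1, mr_sum_blocks w (2 ^ k) (2 ^ j) (2 ^ (k - j))]
      have hkj : j ≤ k := Nat.lt_succ_iff.1 (Finset.mem_range.1 hjm)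
      have h2 : 2 ^ k + 2 ^ (k - j) * 2 ^ j = 2 ^ (k + 1) := by
        rw [← pow_add, Nat.sub_add_cancel hkj, pow_succ]
        ring
      rw [h2, hσ_def]
    rw [Finset.sum_congr rfl hj, Finset.sum_const, Finset.card_range, nsmul_eq_mul]
    push_cast
    ring
  -- the maximal (bisection) estimate
  have hmax : ∀ (k r : ℕ) (x : X), r ≤ 2 ^ k →
      ‖P (2 ^ k + r) x - P (2 ^ k) x‖ ^ 2 ≤ ((k : ℝ) + 1) * Fk k x := by
    intro k r x hr
    set u : ℕ → ℕ := fun j => 2 ^ j * (r / 2 ^ j) with hu_def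
    have hu0 : u 0 = r := by simp [hu_def]
    have huK : u (k + 1) = 0 := by
      have h1 : r < 2 ^ (k + 1) := lt_of_le_of_lt hr (Nat.pow_lt_pow_succ one_lt_two)
      simp [hu_def, Nat.div_eq_of_lt h1]
    have hustep : ∀ j, u j = u (j + 1) + 2 ^ j * (r / 2 ^ j % 2) := by
      intro j
      have h1 : r / 2 ^ (j + 1) = r / 2 ^ j / 2 := by
        rw [pow_succ, ← Nat.div_div_eq_div_mul]
      calc u j = 2 ^ j * (r / 2 ^ j) := rfl
        _ = 2 ^ j * (2 * (r / 2 ^ j / 2) + r / 2 ^ j % 2) := by rw [Nat.div_add_mod]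
        _ = 2 ^ (j + 1) * (r / 2 ^ j / 2) + 2 ^ j * (r / 2 ^ j % 2) := by ring
        _ = u (j + 1) + 2 ^ j * (r / 2 ^ j % 2) := by
            simp only [hu_def]; rw [h1]
    have hule : ∀ j, u j ≤ r := by
      intro j
      simp only [hu_def]
      rw [mul_comm]
      exact Nat.div_mul_le_self r _
    set D : ℕ → H := fun j => P (2 ^ k + u j) x - P (2 ^ k + u (j + 1)) x with hD_def
    have htel : ∑ j ∈ Finset.range (k + 1), D j = P (2 ^ k + r) x - P (2 ^ k) x := by
      have h := Finset.sum_range_sub' (fun j => P (2 ^ k + u j) x) (k + 1)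
      simp only [hD_def]
      refine h.trans ?_
      simp only [hu0, huK, add_zero]
    have hCS : ‖P (2 ^ k + r) x - P (2 ^ k) x‖ ^ 2
        ≤ ((k : ℝ) + 1) * ∑ j ∈ Finset.range (k + 1), ‖D j‖ ^ 2 := by
      rw [← htel]
      have h := mr_norm_sum_sq_le (Finset.range (k + 1)) D
      simpa using h
    refine hCS.trans ?_
    have hterm : ∀ j ∈ Finset.range (k + 1), ‖D j‖ ^ 2 ≤
        ∑ q ∈ Finset.range (2 ^ (k - j)),
          ‖∑ n ∈ Finset.Ioc (2 ^ k + q * 2 ^ j) (2 ^ k + (q + 1) * 2 ^ j), f n x‖ ^ 2 := by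
      intro j hjmem
      have hkj : j ≤ k := Nat.lt_succ_iff.1 (Finset.mem_range.1 hjmem)
      rcases Nat.mod_two_eq_zero_or_one (r / 2 ^ j) with h0 | h1
      · have he : u j = u (j + 1) := by
          have h := hustep j
          rw [h0] at h
          simpa using h
        have hD0 : D j = 0 := by
          simp only [hD_def]
          rw [he, sub_self]
        rw [hD0, norm_zero]
        rw [zero_pow (by norm_num : (2:ℕ) ≠ 0)]
        exact Finset.sum_nonneg fun q _ => sq_nonneg _
      · set q0 : ℕ := 2 * (r / 2 ^ (j + 1)) with hq0_def
        have hq1 : u (j + 1) = q0 * 2 ^ j := by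
          simp only [hu_def, hq0_def]
          rw [pow_succ]
          ring
        have hq2 : u j = (q0 + 1) * 2 ^ j := by
          rw [hustep j, h1, hq1]
          ring
        have hqlt : q0 < 2 ^ (k - j) := by
          have h3 : (q0 + 1) * 2 ^ j ≤ 2 ^ (k - j) * 2 ^ j := by
            rw [← hq2, ← pow_add, Nat.sub_add_cancel hkj]
            exact (hule j).trans hr
          have h5 : 0 < 2 ^ j := Nat.pow_pos (by norm_num)
          have := Nat.le_of_mul_le_mul_right h3 h5
          omega
        have hle1 : 2 ^ k + u (j + 1) ≤ 2 ^ k + u j := by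
          have := hustep j
          omega
        have hDval : D j
            = ∑ n ∈ Finset.Ioc (2 ^ k + q0 * 2 ^ j) (2 ^ k + (q0 + 1) * 2 ^ j), f n x := by
          have hc := Finset.sum_Ioc_consecutive (fun n => f n x)
            (Nat.zero_le (2 ^ k + u (j + 1))) hle1
          simp only [hD_def, hP_def]
          rw [← hc, add_sub_cancel_left, hq1, hq2]
        rw [hDval]
        exact Finset.single_le_sum
          (f := fun q => ‖∑ n ∈ Finset.Ioc (2 ^ k + q * 2 ^ j) (2 ^ k + (q + 1) * 2 ^ j), f n x‖ ^ 2)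
          (fun q _ => sq_nonneg _) (Finset.mem_range.2 hqlt)
    have hk1 : (0:ℝ) ≤ (k : ℝ) + 1 := by positivity
    exact mul_le_mul_of_nonneg_left (Finset.sum_le_sum hterm) hk1
  -- summability bookkeeping
  set L2c : ℝ := ∑' n, W (n + 1) with hL2c_def
  have hL2c_nonneg : 0 ≤ L2c := tsum_nonneg fun n => hW_nonneg _
  have hWtail_le : ∀ m : ℕ, ∑' i, W (i + (m + 1)) ≤ L2c := by
    intro m
    have key := Summable.sum_add_tsum_nat_add (f := fun n => W (n + 1)) m hLW
    have harg : ∀ i : ℕ, i + m + 1 = i + (m + 1) := fun i => by omega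
    simp only [harg] at key
    have hpart : 0 ≤ ∑ i ∈ Finset.range m, W (i + 1) :=
      Finset.sum_nonneg fun i _ => hW_nonneg _
    simp only [hL2c_def]
    linarith [key]
  have htail_le : ∀ k : ℕ, tail (2 ^ k) ≤ L2c / ((max 1 k : ℕ) : ℝ) ^ 2 := by
    intro k
    set K : ℕ := max 1 k with hK_def
    have hK1 : 1 ≤ K := le_max_left 1 k
    have hKpos : (0:ℝ) < (K : ℝ) := by exact_mod_cast lt_of_lt_of_le zero_lt_one hK1
    have hK2pos : (0:ℝ) < ((K : ℕ) : ℝ) ^ 2 := pow_pos hKpos 2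
    have hmain : ((K : ℕ) : ℝ) ^ 2 * tail (2 ^ k) ≤ L2c := by
      have h1 : ((K : ℕ) : ℝ) ^ 2 * tail (2 ^ k)
          = ∑' i, ((K : ℕ) : ℝ) ^ 2 * w (i + (2 ^ k + 1)) := by
        simp only [htail_def]
        rw [tsum_mul_left]
      rw [h1]
      have hterm : ∀ i : ℕ, ((K : ℕ) : ℝ) ^ 2 * w (i + (2 ^ k + 1)) ≤ W (i + (2 ^ k + 1)) := by
        intro i
        set n : ℕ := i + (2 ^ k + 1) with hn_def
        have hn1 : 2 ^ k < n := by omega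
        have hlogk : (k : ℝ) ≤ Real.logb 2 ((n : ℝ) + 1) := hlog k n hn1
        have hlog1 : (1 : ℝ) ≤ Real.logb 2 ((n : ℝ) + 1) := hone_le_log n (lt_of_le_of_lt (Nat.zero_le _) hn1)
        have hKle : ((K : ℕ) : ℝ) ≤ Real.logb 2 ((n : ℝ) + 1) := by
          rcases max_cases 1 k with ⟨he, _⟩ | ⟨he, _⟩ <;> rw [hK_def, he]
          · exact_mod_cast hlog1
          · exact hlogk
        have hw0 := hw_nonneg n
        have hWn : W n = w n * Real.logb 2 ((n : ℝ) + 1) ^ 2 := rfl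
        nlinarith [mul_nonneg hw0 (mul_nonneg (sub_nonneg.2 hKle)
          (by linarith : (0:ℝ) ≤ Real.logb 2 ((n : ℝ) + 1) + ((K : ℕ) : ℝ)))]
      calc ∑' i, ((K : ℕ) : ℝ) ^ 2 * w (i + (2 ^ k + 1))
          ≤ ∑' i, W (i + (2 ^ k + 1)) :=
            Summable.tsum_le_tsum hterm ((htail_summable (2 ^ k)).mul_left _)
              ((summable_nat_add_iff (2 ^ k + 1)).2 hsum_W')
        _ ≤ L2c := hWtail_le (2 ^ k)
    rw [le_div_iff₀ hK2pos]
    calc tail (2 ^ k) * ((K : ℕ) : ℝ) ^ 2 = ((K : ℕ) : ℝ) ^ 2 * tail (2 ^ k) := mul_comm _ _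
      _ ≤ L2c := hmain
  have hb_summable : Summable fun k : ℕ => L2c / ((max 1 k : ℕ) : ℝ) ^ 2 := by
    have h1 : Summable fun k : ℕ => 1 / (((k : ℕ) : ℝ) + 1) ^ 2 := by
      have h0 := (Real.summable_one_div_nat_pow (p := 2)).2 one_lt_two
      have h2 := (summable_nat_add_iff 1).2 h0
      refine h2.congr fun n => ?_
      push_cast
      ring
    have h3 : Summable fun k : ℕ => 1 / ((max 1 k : ℕ) : ℝ) ^ 2 := by
      rw [← summable_nat_add_iff 1]
      refine h1.congr fun n => ?_
      rw [Nat.max_eq_right (by omega : 1 ≤ n + 1)]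
      push_cast
      ring
    refine (h3.mul_left L2c).congr fun k => ?_
    rw [mul_one_div]
  have hofReal_b : (∑' k : ℕ, ENNReal.ofReal (L2c / ((max 1 k : ℕ) : ℝ) ^ 2)) ≠ ⊤ := by
    rw [← ENNReal.ofReal_tsum_of_nonneg
      (fun k => div_nonneg hL2c_nonneg (sq_nonneg _)) hb_summable]
    exact ENNReal.ofReal_ne_top
  set τ : ℕ → ℝ := fun k => ∑ n ∈ Finset.Ioc (2 ^ k) (2 ^ (k + 1)), W n with hτ_def
  have hτ_nonneg : ∀ k, 0 ≤ τ k := fun k => Finset.sum_nonneg fun n _ => hW_nonneg n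
  have hτ_partial : ∀ K : ℕ, ∑ k ∈ Finset.range K, τ k = ∑ n ∈ Finset.Ioc 1 (2 ^ K), W n := by
    intro K
    induction K with
    | zero => simp
    | succ K ih =>
        rw [Finset.sum_range_succ, ih]
        simp only [hτ_def]
        exact Finset.sum_Ioc_consecutive W Nat.one_le_two_pow
          (Nat.pow_le_pow_right (by norm_num) (Nat.le_succ K))
  have hτ_bound : ∀ K : ℕ, ∑ k ∈ Finset.range K, τ k ≤ L2c := by
    intro K
    rw [hτ_partial K, mr_sum_Ioc_eq W 1 (2 ^ K)]
    calc ∑ i ∈ Finset.range (2 ^ K - 1), W (i + (1 + 1))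
        ≤ ∑' i, W (i + (1 + 1)) :=
          Summable.sum_le_tsum _ (fun i _ => hW_nonneg _) ((summable_nat_add_iff (1 + 1)).2 hsum_W')
      _ ≤ L2c := hWtail_le 1
  have hτ_summable : Summable τ := summable_of_sum_range_le hτ_nonneg hτ_bound
  have hστ : ∀ k : ℕ, ((k : ℝ) + 1) ^ 2 * σ k ≤ 4 * τ k := by
    intro k
    simp only [hσ_def, hτ_def]
    rw [Finset.mul_sum, Finset.mul_sum]
    refine Finset.sum_le_sum fun n hn => ?_
    have hn1 : 2 ^ k < n := (Finset.mem_Ioc.1 hn).1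
    have h2k : (1:ℕ) ≤ 2 ^ k := Nat.one_le_two_pow
    have hlogk : (k : ℝ) ≤ Real.logb 2 ((n : ℝ) + 1) := hlog k n hn1
    have hlog1 : (1 : ℝ) ≤ Real.logb 2 ((n : ℝ) + 1) := hone_le_log n (lt_of_le_of_lt (Nat.zero_le _) hn1)
    have hhalf : ((k : ℝ) + 1) / 2 ≤ Real.logb 2 ((n : ℝ) + 1) := by
      rcases Nat.eq_zero_or_pos k with hk0 | hk1
      · subst hk0
        simp only [Nat.cast_zero]
        linarith
      · have hk1' : (1:ℝ) ≤ (k : ℝ) := by exact_mod_cast hk1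
        linarith
    have hw0 := hw_nonneg n
    have hWn : W n = w n * Real.logb 2 ((n : ℝ) + 1) ^ 2 := rfl
    nlinarith [mul_nonneg hw0 (mul_nonneg (sub_nonneg.2 hhalf)
      (by linarith : (0:ℝ) ≤ Real.logb 2 ((n : ℝ) + 1) + ((k : ℝ) + 1) / 2))]
  -- ENNReal a.e. argument
  have hP_aesm : ∀ m : ℕ, AEStronglyMeasurable (P m) μ := by
    intro m
    simp only [hP_def]
    exact Finset.aestronglyMeasurable_fun_sum _ fun n hn => hf_aesm n (Finset.mem_Ioc.1 hn).1
  have hq_aem : ∀ k : ℕ, AEMeasurable (fun x => ENNReal.ofReal (‖P (2 ^ k) x - G x‖ ^ 2)) μ := by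
    intro k
    have h2 : AEStronglyMeasurable (fun x => P (2 ^ k) x - G x) μ :=
      (hP_aesm (2 ^ k)).sub (Lp.aestronglyMeasurable G)
    exact ENNReal.measurable_ofReal.comp_aemeasurable ((h2.norm.aemeasurable).pow_const 2)
  have hFk_aem : ∀ k : ℕ, AEMeasurable (fun x => ENNReal.ofReal (((k : ℝ) + 1) * Fk k x)) μ := by
    intro k
    exact ENNReal.measurable_ofReal.comp_aemeasurable
      (((hFk_int k).aestronglyMeasurable.aemeasurable).const_mul _)
  have hlint1 : ∀ k : ℕ, ∫⁻ x, ENNReal.ofReal (‖P (2 ^ k) x - G x‖ ^ 2) ∂μ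
      ≤ ENNReal.ofReal (L2c / ((max 1 k : ℕ) : ℝ) ^ 2) := by
    intro k
    rw [← ofReal_integral_eq_lintegral_ofReal (hq k).1
      (Eventually.of_forall fun x => sq_nonneg _)]
    exact ENNReal.ofReal_le_ofReal ((hq k).2.trans (htail_le k))
  have hlint2 : ∀ k : ℕ, ∫⁻ x, ENNReal.ofReal (((k : ℝ) + 1) * Fk k x) ∂μ
      ≤ ENNReal.ofReal (4 * τ k) := by
    intro k
    rw [← ofReal_integral_eq_lintegral_ofReal ((hFk_int k).const_mul _)
      (Eventually.of_forall fun x => mul_nonneg (by positivity) (hFk_nonneg k x))]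
    refine ENNReal.ofReal_le_ofReal ?_
    rw [integral_const_mul, hFk_val k]
    calc ((k : ℝ) + 1) * (((k : ℝ) + 1) * σ k) = ((k : ℝ) + 1) ^ 2 * σ k := by ring
      _ ≤ 4 * τ k := hστ k
  have hsum1 : (∑' k : ℕ, ∫⁻ x, ENNReal.ofReal (‖P (2 ^ k) x - G x‖ ^ 2) ∂μ) ≠ ⊤ :=
    ne_top_of_le_ne_top hofReal_b (ENNReal.tsum_le_tsum fun k => hlint1 k)
  have hsum2 : (∑' k : ℕ, ∫⁻ x, ENNReal.ofReal (((k : ℝ) + 1) * Fk k x) ∂μ) ≠ ⊤ := by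
    refine ne_top_of_le_ne_top ?_ (ENNReal.tsum_le_tsum fun k => hlint2 k)
    rw [← ENNReal.ofReal_tsum_of_nonneg (fun k => mul_nonneg (by norm_num) (hτ_nonneg k))
      (hτ_summable.mul_left 4)]
    exact ENNReal.ofReal_ne_top
  have hae1 : ∀ᵐ x ∂μ, (∑' k : ℕ, ENNReal.ofReal (‖P (2 ^ k) x - G x‖ ^ 2)) < ⊤ := by
    refine ae_lt_top' (AEMeasurable.ennreal_tsum hq_aem) ?_
    rw [lintegral_tsum hq_aem]
    exact hsum1
  have hae2 : ∀ᵐ x ∂μ, (∑' k : ℕ, ENNReal.ofReal (((k : ℝ) + 1) * Fk k x)) < ⊤ := by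
    refine ae_lt_top' (AEMeasurable.ennreal_tsum hFk_aem) ?_
    rw [lintegral_tsum hFk_aem]
    exact hsum2
  filter_upwards [hae1, hae2] with x hx1 hx2
  refine ⟨G x, ?_⟩
  have hgoal_eq : (fun m : ℕ => ∑ n ∈ Finset.Icc 1 m, a n • φ n x) = fun m => P m x := by
    funext m
    have hIcc : Finset.Icc 1 m = Finset.Ioc 0 m := by
      ext n
      simp only [Finset.mem_Icc, Finset.mem_Ioc]
      omega
    simp only [hP_def, hf_def, hIcc]
  rw [hgoal_eq]
  have hsx1 : Summable fun k : ℕ => ‖P (2 ^ k) x - G x‖ ^ 2 := by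
    have h := ENNReal.summable_toReal hx1.ne
    exact h.congr fun k => ENNReal.toReal_ofReal (sq_nonneg _)
  have hconv1 : Tendsto (fun k : ℕ => P (2 ^ k) x) atTop (nhds (G x)) := by
    rw [tendsto_iff_norm_sub_tendsto_zero]
    have h0 := hsx1.tendsto_atTop_zero
    have h1 := (Real.continuous_sqrt.tendsto' 0 0 (by simp)).comp h0
    exact h1.congr fun k => Real.sqrt_sq (norm_nonneg _)
  have hsx2 : Summable fun k : ℕ => ((k : ℝ) + 1) * Fk k x := by
    have h := ENNReal.summable_toReal hx2.ne
    exact h.congr fun k =>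
      ENNReal.toReal_ofReal (mul_nonneg (by positivity) (hFk_nonneg k x))
  have hconv2 : Tendsto (fun k : ℕ => ((k : ℝ) + 1) * Fk k x) atTop (nhds 0) :=
    hsx2.tendsto_atTop_zero
  rw [Metric.tendsto_atTop]
  intro ε hε
  obtain ⟨K1, hK1⟩ := Metric.tendsto_atTop.1 hconv1 (ε / 2) (half_pos hε)
  obtain ⟨K2, hK2⟩ := Metric.tendsto_atTop.1 hconv2 ((ε / 2) ^ 2) (by positivity)
  refine ⟨2 ^ (max K1 K2), fun m hm => ?_⟩
  set k := Nat.log 2 m with hk_def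
  have hm1 : 1 ≤ m := le_trans Nat.one_le_two_pow hm
  have hkK : max K1 K2 ≤ k := by
    have h1 := Nat.log_mono_right (b := 2) hm
    rwa [Nat.log_pow (by norm_num)] at h1
  have h2k : 2 ^ k ≤ m := Nat.pow_log_le_self 2 (by omega)
  have h2k1 : m < 2 ^ (k + 1) := Nat.lt_pow_succ_log_self (by norm_num) m
  have hpow : 2 ^ (k + 1) = 2 * 2 ^ k := by rw [pow_succ]; ring
  have hr2 : m - 2 ^ k ≤ 2 ^ k := by omega
  have hrm : 2 ^ k + (m - 2 ^ k) = m := by omega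
  have hb2 : dist (P (2 ^ k) x) (G x) < ε / 2 := hK1 k (le_trans (le_max_left _ _) hkK)
  have hb1 : ‖P m x - P (2 ^ k) x‖ < ε / 2 := by
    have h := hmax k (m - 2 ^ k) x hr2
    rw [hrm] at h
    have hF := hK2 k (le_trans (le_max_right _ _) hkK)
    rw [Real.dist_eq, sub_zero,
      abs_of_nonneg (mul_nonneg (by positivity) (hFk_nonneg k x))] at hF
    have hlt : ‖P m x - P (2 ^ k) x‖ ^ 2 < (ε / 2) ^ 2 := lt_of_le_of_lt h hF
    exact lt_of_pow_lt_pow_left₀ 2 (le_of_lt (half_pos hε)) hlt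
  calc dist (P m x) (G x)
      ≤ dist (P m x) (P (2 ^ k) x) + dist (P (2 ^ k) x) (G x) := dist_triangle _ _ _
    _ < ε / 2 + ε / 2 := by
        rw [dist_eq_norm]
        exact add_lt_add hb1 hb2
    _ = ε := add_halves ε
end

section
/- Let (a_n)_{n=1}^∞ be a sequence of scalars with L := Σ_{n=1}^∞ |a_n|² (log₂(n+1))² < ∞, and let (φ_n)_{n=1}^∞ be an orthonormal system in L₂(X, dμ; H). Define the majorant of partial sums S*(x) := sup_{m ∈ ℕ} ‖Σ_{n=1}^m a_n φ_n(x)‖_H for x ∈ X. Then (∫_X S*(x)² dμ(x))^{1/2} ≤ 4 √L. -/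
open MeasureTheory Filter
open scoped ENNReal NNReal BigOperators

namespace MenshovRademacherAux

open Finset

/-! ### Combinatorial dyadic decomposition lemmas -/

/-- The dyadic block of `m` at bit `j`. -/
def blk (m j : ℕ) : Finset ℕ :=
  Finset.Ioc (2 ^ (j + 1) * (m / 2 ^ (j + 1))) (2 ^ (j + 1) * (m / 2 ^ (j + 1)) + 2 ^ j)

/-- The `j`-th dyadic difference interval `(2^(j-1), 2^j]` (equal to `{1}` for `j = 0`). -/
def dint (j : ℕ) : Finset ℕ := Finset.Ioc (2 ^ j / 2) (2 ^ j)

/-- The cell `(k 2^j, k 2^j + 2^j]`. -/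
def cell (j k : ℕ) : Finset ℕ := Finset.Ioc (k * 2 ^ j) (k * 2 ^ j + 2 ^ j)

lemma blk_shift {M j t : ℕ} (hj : j < M) (ht : t < 2 ^ M) :
    blk (2 ^ M + t) j = Finset.map (addLeftEmbedding (2 ^ M)) (blk t j) := by
  have hp : (0:ℕ) < 2 ^ (j + 1) := Nat.pow_pos (by norm_num)
  have hM : (2:ℕ) ^ M = 2 ^ (j + 1) * 2 ^ (M - (j + 1)) := by
    rw [← pow_add]; congr 1; omega
  have h1 : (2 ^ M + t) / 2 ^ (j + 1) = 2 ^ (M - (j + 1)) + t / 2 ^ (j + 1) := by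
    rw [hM, Nat.mul_add_div hp]
  unfold blk
  rw [Finset.map_add_left_Ioc, h1]
  congr 1
  · rw [Nat.mul_add, ← hM]
  · rw [Nat.mul_add, ← hM, Nat.add_assoc]

lemma sum_decomp {E : Type*} [AddCommMonoid E] :
    ∀ (M : ℕ) (v : ℕ → E) (m : ℕ), m < 2 ^ M →
      ∑ n ∈ Finset.Ioc 0 m, v n
        = ∑ j ∈ (Finset.range M).filter (fun j => m.testBit j), ∑ n ∈ blk m j, v n := by
  intro M
  induction M with
  | zero =>
    intro v m hm
    have : m = 0 := by simpa using hm
    subst this; simp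
  | succ M ih =>
    intro v m hm
    by_cases hsmall : m < 2 ^ M
    · have hfil : (Finset.range (M + 1)).filter (fun j => m.testBit j)
          = (Finset.range M).filter (fun j => m.testBit j) := by
        rw [Finset.range_add_one, Finset.filter_insert, if_neg]
        simp [Nat.testBit_lt_two_pow hsmall]
      rw [hfil, ih v m hsmall]
    · push_neg at hsmall
      have htlt : m - 2 ^ M < 2 ^ M := by
        have h2 : (2:ℕ) ^ (M + 1) = 2 ^ M + 2 ^ M := by rw [pow_succ]; omega
        omega
      have hm2 : m = 2 ^ M + (m - 2 ^ M) := by omega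
      set t := m - 2 ^ M with htdef
      have hbit : m.testBit M = true := by
        rw [hm2, Nat.testBit_two_pow_add_eq, Nat.testBit_lt_two_pow htlt]
        rfl
      have hfil : (Finset.range (M + 1)).filter (fun j => m.testBit j)
          = insert M ((Finset.range M).filter (fun j => m.testBit j)) := by
        rw [Finset.range_add_one, Finset.filter_insert, if_pos hbit]
      have hnm : M ∉ (Finset.range M).filter (fun j => m.testBit j) := by simp
      rw [hfil, Finset.sum_insert hnm]
      have htop : blk m M = Finset.Ioc 0 (2 ^ M) := by
        unfold blk
        rw [Nat.div_eq_of_lt hm]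
        simp
      have hsplit : ∑ n ∈ Finset.Ioc 0 m, v n
          = (∑ n ∈ Finset.Ioc 0 (2 ^ M), v n) + ∑ n ∈ Finset.Ioc (2 ^ M) m, v n :=
        (Finset.sum_Ioc_consecutive v (Nat.zero_le _) hsmall).symm
      rw [hsplit, htop]
      congr 1
      have hmap : Finset.Ioc (2 ^ M) m = Finset.map (addLeftEmbedding (2 ^ M)) (Finset.Ioc 0 t) := by
        rw [Finset.map_add_left_Ioc]
        congr 1 <;> omega
      rw [hmap, Finset.sum_map]
      have hlhs : ∑ n ∈ Finset.Ioc 0 t, v (addLeftEmbedding (2 ^ M) n)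
          = ∑ j ∈ (Finset.range M).filter (fun j => t.testBit j), ∑ n ∈ blk t j, v (2 ^ M + n) := by
        simpa [addLeftEmbedding_apply] using ih (fun n => v (2 ^ M + n)) t htlt
      rw [hlhs]
      have hfil2 : (Finset.range M).filter (fun j => t.testBit j)
          = (Finset.range M).filter (fun j => m.testBit j) := by
        apply Finset.filter_congr
        intro j hj
        rw [hm2, Nat.testBit_two_pow_add_gt (Finset.mem_range.mp hj)]
      rw [hfil2]
      refine Finset.sum_congr rfl fun j hj => ?_
      have hjM : j < M := Finset.mem_range.mp (Finset.mem_of_mem_filter j hj)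
      rw [hm2, blk_shift hjM htlt, Finset.sum_map]
      simp [addLeftEmbedding_apply]

lemma sum_dint {E : Type*} [AddCommMonoid E] (v : ℕ → E) (K : ℕ) :
    ∑ n ∈ Finset.Ioc 0 (2 ^ K), v n = ∑ j ∈ Finset.range (K + 1), ∑ n ∈ dint j, v n := by
  induction K with
  | zero => simp [dint]
  | succ K ih =>
    rw [Finset.sum_range_succ, ← ih]
    have h1 : (2:ℕ) ^ K ≤ 2 ^ (K + 1) := Nat.pow_le_pow_right (by norm_num) (Nat.le_succ K)
    rw [← Finset.sum_Ioc_consecutive v (Nat.zero_le (2 ^ K)) h1]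
    congr 1
    unfold dint
    congr 1
    rw [pow_succ, Nat.mul_div_cancel _ (by norm_num)]

/-! ### Real elementary lemmas -/

lemma weighted_cs (s : Finset ℕ) (w r : ℕ → ℝ) (hw : ∀ j ∈ s, 0 < w j) :
    (∑ j ∈ s, r j) ^ 2 ≤ (∑ j ∈ s, (w j)⁻¹) * ∑ j ∈ s, w j * r j ^ 2 := by
  have key := Finset.sum_mul_sq_le_sq_mul_sq s (fun j => (Real.sqrt (w j))⁻¹)
    (fun j => Real.sqrt (w j) * r j)
  have h1 : ∑ j ∈ s, (Real.sqrt (w j))⁻¹ * (Real.sqrt (w j) * r j) = ∑ j ∈ s, r j := by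
    refine Finset.sum_congr rfl fun j hj => ?_
    have hs : Real.sqrt (w j) ≠ 0 := ne_of_gt (Real.sqrt_pos.mpr (hw j hj))
    field_simp
  have h2 : ∑ j ∈ s, ((Real.sqrt (w j))⁻¹) ^ 2 = ∑ j ∈ s, (w j)⁻¹ := by
    refine Finset.sum_congr rfl fun j hj => ?_
    rw [← Real.sqrt_inv, Real.sq_sqrt (inv_nonneg.mpr (hw j hj).le)]
  have h3 : ∑ j ∈ s, (Real.sqrt (w j) * r j) ^ 2 = ∑ j ∈ s, w j * r j ^ 2 := by
    refine Finset.sum_congr rfl fun j hj => ?_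
    rw [mul_pow, Real.sq_sqrt (hw j hj).le]
  rw [h1, h2, h3] at key
  exact key

lemma sum_inv_weight_le (n : ℕ) :
    ∑ j ∈ Finset.range n, (((j : ℝ) + 1) * ((j : ℝ) + 2))⁻¹ ≤ 1 := by
  have h : ∑ j ∈ Finset.range n, (((j : ℝ) + 1) * ((j : ℝ) + 2))⁻¹
      = ∑ j ∈ Finset.range n,
          ((fun i : ℕ => ((i : ℝ) + 1)⁻¹) j - (fun i : ℕ => ((i : ℝ) + 1)⁻¹) (j + 1)) := by
    refine Finset.sum_congr rfl fun j _ => ?_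
    have h1 : ((j : ℝ) + 1) ≠ 0 := by positivity
    have h2 : ((j : ℝ) + 2) ≠ 0 := by positivity
    push_cast
    rw [eq_sub_iff_add_eq]
    field_simp
    ring
  rw [h, Finset.sum_range_sub']
  have : (0:ℝ) ≤ ((n : ℝ) + 1)⁻¹ := by positivity
  simp only [Nat.cast_zero, zero_add, inv_one]
  linarith

lemma cast_le_logb (c n : ℕ) (h : 2 ^ c ≤ n + 1) :
    (c : ℝ) ≤ Real.logb 2 ((n : ℝ) + 1) := by
  have h2 : ((2:ℝ)) ^ c ≤ (n : ℝ) + 1 := by exact_mod_cast h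
  have hpos : (0:ℝ) < 2 ^ c := by positivity
  calc (c : ℝ) = Real.logb 2 ((2:ℝ) ^ c) := by
        rw [Real.logb_pow]
        simp [Real.logb_self_eq_one]
    _ ≤ Real.logb 2 ((n : ℝ) + 1) := Real.logb_le_logb_of_le (by norm_num) hpos h2

lemma P_weight {j n : ℕ} (hn : n ∈ dint j) :
    2 * (((j : ℝ) + 1) * ((j : ℝ) + 2)) ≤ 14 * Real.logb 2 ((n : ℝ) + 1) ^ 2 := by
  obtain ⟨hlo, hhi⟩ := Finset.mem_Ioc.mp hn
  match j with
  | 0 =>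
    have hn1 : n = 1 := by omega
    subst hn1
    have h1 := cast_le_logb 1 1 (by norm_num)
    push_cast at h1 ⊢
    nlinarith
  | 1 =>
    have hn2 : n = 2 := by simp at hlo hhi; omega
    subst hn2
    have h1 := cast_le_logb 1 2 (by norm_num)
    push_cast at h1 ⊢
    nlinarith
  | 2 =>
    have hn3 : 3 ≤ n := by simp at hlo; omega
    have h1 := cast_le_logb 2 n (by omega)
    push_cast at h1 ⊢
    nlinarith
  | (j + 3) =>
    have hpow : 2 ^ (j + 3) / 2 = 2 ^ (j + 2) := by
      rw [pow_succ, Nat.mul_div_cancel _ (by norm_num)]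
    rw [hpow] at hlo
    have h1 := cast_le_logb (j + 2) n (by omega)
    have hj0 : (0:ℝ) ≤ (j:ℝ) := Nat.cast_nonneg j
    push_cast at h1 ⊢
    nlinarith [sq_nonneg ((j:ℝ) + 2), sq_nonneg (Real.logb 2 ((n:ℝ)+1) - ((j:ℝ)+2))]

lemma natlog_sq_le (n : ℕ) (hn : 1 ≤ n) :
    ((Nat.log 2 (n - 1) : ℝ)) ^ 2 ≤ Real.logb 2 ((n : ℝ) + 1) ^ 2 := by
  have h : 2 ^ (Nat.log 2 (n - 1)) ≤ n + 1 := by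
    by_cases h0 : n - 1 = 0
    · rw [h0]; simp
    · have := Nat.pow_log_le_self 2 h0
      omega
  have h1 := cast_le_logb (Nat.log 2 (n - 1)) n h
  have h2 : (0:ℝ) ≤ (Nat.log 2 (n - 1) : ℝ) := Nat.cast_nonneg _
  nlinarith

/-- Regrouping of the `Q`-type weighted sum per frequency `n`. -/
lemma Q_sum_le (b : ℕ → ℝ) (hb : ∀ n, 0 ≤ b n) (K M NB : ℕ)
    (hNB : ∀ j ∈ Finset.range (K + 1), ∀ k ∈ Finset.Ico 2 (M + 2), cell j k ⊆ Finset.Ioc 0 NB) :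
    ∑ j ∈ Finset.range (K + 1), ∑ k ∈ Finset.Ico 2 (M + 2),
        ((j + Nat.log 2 k : ℕ) : ℝ) * ∑ n ∈ cell j k, b n
      ≤ ∑ n ∈ Finset.Ioc 0 NB, ((Nat.log 2 (n - 1) : ℝ)) ^ 2 * b n := by
  classical
  have hrw : ∀ j ∈ Finset.range (K + 1), ∀ k ∈ Finset.Ico 2 (M + 2),
      ((j + Nat.log 2 k : ℕ) : ℝ) * ∑ n ∈ cell j k, b n
        = ∑ n ∈ Finset.Ioc 0 NB,
            ((j + Nat.log 2 k : ℕ) : ℝ) * (if n ∈ cell j k then b n else 0) := by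
    intro j hj k hk
    rw [← Finset.mul_sum]
    congr 1
    rw [Finset.sum_ite_mem, Finset.inter_eq_right.mpr (hNB j hj k hk)]
  calc ∑ j ∈ Finset.range (K + 1), ∑ k ∈ Finset.Ico 2 (M + 2),
        ((j + Nat.log 2 k : ℕ) : ℝ) * ∑ n ∈ cell j k, b n
      = ∑ n ∈ Finset.Ioc 0 NB, ∑ j ∈ Finset.range (K + 1), ∑ k ∈ Finset.Ico 2 (M + 2),
          ((j + Nat.log 2 k : ℕ) : ℝ) * (if n ∈ cell j k then b n else 0) := by
        have e1 : ∑ j ∈ Finset.range (K + 1), ∑ k ∈ Finset.Ico 2 (M + 2),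
            ((j + Nat.log 2 k : ℕ) : ℝ) * ∑ n ∈ cell j k, b n
            = ∑ j ∈ Finset.range (K + 1), ∑ k ∈ Finset.Ico 2 (M + 2), ∑ n ∈ Finset.Ioc 0 NB,
                ((j + Nat.log 2 k : ℕ) : ℝ) * (if n ∈ cell j k then b n else 0) :=
          Finset.sum_congr rfl fun j hj => Finset.sum_congr rfl fun k hk => hrw j hj k hk
        rw [e1]
        have e2 : ∑ j ∈ Finset.range (K + 1), ∑ k ∈ Finset.Ico 2 (M + 2), ∑ n ∈ Finset.Ioc 0 NB,
              ((j + Nat.log 2 k : ℕ) : ℝ) * (if n ∈ cell j k then b n else 0)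
            = ∑ j ∈ Finset.range (K + 1), ∑ n ∈ Finset.Ioc 0 NB, ∑ k ∈ Finset.Ico 2 (M + 2),
              ((j + Nat.log 2 k : ℕ) : ℝ) * (if n ∈ cell j k then b n else 0) :=
          Finset.sum_congr rfl fun j _ => Finset.sum_comm
        rw [e2, Finset.sum_comm]
    _ ≤ ∑ n ∈ Finset.Ioc 0 NB, ((Nat.log 2 (n - 1) : ℝ)) ^ 2 * b n := by
        refine Finset.sum_le_sum fun n hn => ?_
        obtain ⟨hn0, hnNB⟩ := Finset.mem_Ioc.mp hn
        set l := Nat.log 2 (n - 1) with hl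
        -- bound the inner double sum
        have hper : ∀ j ∈ Finset.range (K + 1),
            ∑ k ∈ Finset.Ico 2 (M + 2),
                ((j + Nat.log 2 k : ℕ) : ℝ) * (if n ∈ cell j k then b n else 0)
              ≤ if 2 ^ (j + 1) ≤ n - 1 then (l : ℝ) * b n else 0 := by
          intro j _
          by_cases hc : 2 ^ (j + 1) ≤ n - 1
          · rw [if_pos hc]
            have hterm : ∀ k ∈ Finset.Ico 2 (M + 2),
                ((j + Nat.log 2 k : ℕ) : ℝ) * (if n ∈ cell j k then b n else 0)
                  ≤ if k = (n - 1) / 2 ^ j then (l : ℝ) * b n else 0 := by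
              intro k hk
              obtain ⟨hk2, _⟩ := Finset.mem_Ico.mp hk
              by_cases hmemc : n ∈ cell j k
              · rw [if_pos hmemc]
                obtain ⟨hlo, hhi⟩ := Finset.mem_Ioc.mp hmemc
                have hkeq : k = (n - 1) / 2 ^ j := by
                  symm
                  apply Nat.div_eq_of_lt_le
                  · omega
                  · have : n ≤ (k + 1) * 2 ^ j := by
                      rw [add_mul, one_mul]; omega
                    omega
                rw [if_pos hkeq]
                have hwle : j + Nat.log 2 k ≤ l := by
                  have hkn0 : k ≠ 0 := by omega
                  have h2 : 2 ^ (j + Nat.log 2 k) ≤ n - 1 := by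
                    rw [pow_add, mul_comm]
                    calc 2 ^ Nat.log 2 k * 2 ^ j ≤ k * 2 ^ j :=
                          Nat.mul_le_mul_right _ (Nat.pow_log_le_self 2 hkn0)
                    _ ≤ n - 1 := by omega
                  exact (Nat.le_log_iff_pow_le (by norm_num) (by omega)).mpr h2
                have hcast : ((j + Nat.log 2 k : ℕ) : ℝ) ≤ (l : ℝ) := by exact_mod_cast hwle
                exact mul_le_mul_of_nonneg_right hcast (hb n)
              · rw [if_neg hmemc, mul_zero]
                split_ifs
                · exact mul_nonneg (Nat.cast_nonneg _) (hb n)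
                · exact le_rfl
            calc ∑ k ∈ Finset.Ico 2 (M + 2),
                  ((j + Nat.log 2 k : ℕ) : ℝ) * (if n ∈ cell j k then b n else 0)
                ≤ ∑ k ∈ Finset.Ico 2 (M + 2), (if k = (n - 1) / 2 ^ j then (l : ℝ) * b n else 0) :=
                  Finset.sum_le_sum hterm
              _ ≤ (l : ℝ) * b n := by
                  rw [Finset.sum_ite_eq' (Finset.Ico 2 (M + 2)) ((n - 1) / 2 ^ j)
                    (fun _ => (l : ℝ) * b n)]
                  split_ifs
                  · exact le_rfl
                  · exact mul_nonneg (Nat.cast_nonneg _) (hb n)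
          · rw [if_neg hc]
            have hz : ∀ k ∈ Finset.Ico 2 (M + 2),
                ((j + Nat.log 2 k : ℕ) : ℝ) * (if n ∈ cell j k then b n else 0) = 0 := by
              intro k hk
              obtain ⟨hk2, _⟩ := Finset.mem_Ico.mp hk
              have : n ∉ cell j k := by
                intro hmemc
                obtain ⟨hlo, _⟩ := Finset.mem_Ioc.mp hmemc
                have h2 : 2 ^ (j + 1) ≤ k * 2 ^ j := by
                  rw [pow_succ]
                  calc 2 ^ j * 2 = 2 * 2 ^ j := by ring
                  _ ≤ k * 2 ^ j := Nat.mul_le_mul_right _ hk2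
                omega
              rw [if_neg this, mul_zero]
            rw [Finset.sum_eq_zero hz]
        calc ∑ j ∈ Finset.range (K + 1), ∑ k ∈ Finset.Ico 2 (M + 2),
              ((j + Nat.log 2 k : ℕ) : ℝ) * (if n ∈ cell j k then b n else 0)
            ≤ ∑ j ∈ Finset.range (K + 1), (if 2 ^ (j + 1) ≤ n - 1 then (l : ℝ) * b n else 0) :=
              Finset.sum_le_sum hper
          _ ≤ ((l : ℝ)) ^ 2 * b n := by
              rw [Finset.sum_ite, Finset.sum_const_zero, add_zero, Finset.sum_const,
                nsmul_eq_mul]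
              have hcard : ((Finset.range (K + 1)).filter (fun j => 2 ^ (j + 1) ≤ n - 1)).card ≤ l := by
                calc ((Finset.range (K + 1)).filter (fun j => 2 ^ (j + 1) ≤ n - 1)).card
                    ≤ (Finset.range l).card := by
                      apply Finset.card_le_card
                      intro j hj
                      have h2 := (Finset.mem_filter.mp hj).2
                      have hn1 : n - 1 ≠ 0 := by
                        have : (2:ℕ) ≤ 2 ^ (j + 1) := by
                          calc (2:ℕ) = 2 ^ 1 := rfl
                          _ ≤ 2 ^ (j + 1) := Nat.pow_le_pow_right (by norm_num) (by omega)
                        omega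
                      have := (Nat.le_log_iff_pow_le (by norm_num) hn1).mpr h2
                      exact Finset.mem_range.mpr (by omega)
                  _ = l := Finset.card_range l
              have hcastc : (((Finset.range (K + 1)).filter (fun j => 2 ^ (j + 1) ≤ n - 1)).card : ℝ)
                  ≤ (l : ℝ) := by exact_mod_cast hcard
              have hlb : (0:ℝ) ≤ (l : ℝ) * b n := mul_nonneg (Nat.cast_nonneg _) (hb n)
              calc (((Finset.range (K + 1)).filter (fun j => 2 ^ (j + 1) ≤ n - 1)).card : ℝ)
                    * ((l : ℝ) * b n)
                  ≤ (l : ℝ) * ((l : ℝ) * b n) := mul_le_mul_of_nonneg_right hcastc hlb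
                _ = ((l : ℝ)) ^ 2 * b n := by ring

/-! ### The pointwise maximal bound -/

section Pointwise

variable {H : Type*} [NormedAddCommGroup H]

/-- Pointwise Menshov–Rademacher bound for a single partial sum. -/
lemma pointwise_bound (u : ℕ → H) (Mx m : ℕ) (hm1 : 1 ≤ m) (hm2 : m ≤ Mx + 1) :
    ‖∑ n ∈ Finset.Ioc 0 m, u n‖ ^ 2 ≤
      2 * (∑ j ∈ Finset.range (Nat.log 2 (Mx + 1) + 1),
            (((j : ℝ) + 1) * ((j : ℝ) + 2)) * ‖∑ n ∈ dint j, u n‖ ^ 2)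
      + 2 * (∑ j ∈ Finset.range (Nat.log 2 (Mx + 1) + 1),
            ∑ k ∈ Finset.Ico 2 (Mx + 2),
              ((j + Nat.log 2 k : ℕ) : ℝ) * ‖∑ n ∈ cell j k, u n‖ ^ 2) := by
  classical
  set K := Nat.log 2 (Mx + 1) with hKdef
  set J := Nat.log 2 m with hJdef
  have hm0 : m ≠ 0 := by omega
  have h2J : 2 ^ J ≤ m := Nat.pow_log_le_self 2 hm0
  have hmJ : m < 2 ^ (J + 1) := Nat.lt_pow_succ_log_self (by norm_num) m
  have hJK : J ≤ K := Nat.log_mono_right hm2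
  have hdec := sum_decomp (J + 1) u m hmJ
  have htlt : m - 2 ^ J < 2 ^ J := by
    have h2 : (2:ℕ) ^ (J + 1) = 2 ^ J + 2 ^ J := by rw [pow_succ]; omega
    omega
  have hbitJ : m.testBit J = true := by
    rw [show m = 2 ^ J + (m - 2 ^ J) by omega, Nat.testBit_two_pow_add_eq,
      Nat.testBit_lt_two_pow htlt]
    rfl
  have hfil : (Finset.range (J + 1)).filter (fun j => m.testBit j)
      = insert J ((Finset.range J).filter (fun j => m.testBit j)) := by
    rw [Finset.range_add_one, Finset.filter_insert, if_pos hbitJ]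
  have hnotmem : J ∉ (Finset.range J).filter (fun j => m.testBit j) := by simp
  have htop : blk m J = Finset.Ioc 0 (2 ^ J) := by
    unfold blk
    rw [Nat.div_eq_of_lt hmJ]
    simp
  rw [hfil, Finset.sum_insert hnotmem, htop] at hdec
  set B := ∑ n ∈ Finset.Ioc 0 (2 ^ J), u n with hB
  set bits := (Finset.range J).filter (fun j => m.testBit j) with hbits
  set R := ∑ j ∈ bits, ∑ n ∈ blk m j, u n with hR
  have hsq : ‖∑ n ∈ Finset.Ioc 0 m, u n‖ ^ 2 ≤ 2 * ‖B‖ ^ 2 + 2 * ‖R‖ ^ 2 := by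
    rw [hdec]
    have h := norm_add_le B R
    have h1 := norm_nonneg B
    have h2 := norm_nonneg R
    have h3 := norm_nonneg (B + R)
    have h4 : ‖B + R‖ ^ 2 ≤ (‖B‖ + ‖R‖) ^ 2 := by nlinarith
    nlinarith [sq_nonneg (‖B‖ - ‖R‖)]
  -- bound for the leading part B
  have hBbound : ‖B‖ ^ 2
      ≤ ∑ j ∈ Finset.range (K + 1), (((j : ℝ) + 1) * ((j : ℝ) + 2)) * ‖∑ n ∈ dint j, u n‖ ^ 2 := by
    have htri : ‖B‖ ≤ ∑ j ∈ Finset.range (J + 1), ‖∑ n ∈ dint j, u n‖ := by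
      rw [hB, sum_dint u J]
      exact norm_sum_le _ _
    have hcs := weighted_cs (Finset.range (J + 1)) (fun j => ((j : ℝ) + 1) * ((j : ℝ) + 2))
        (fun j => ‖∑ n ∈ dint j, u n‖) (fun j _ => by positivity)
    have hw1 := sum_inv_weight_le (J + 1)
    have hnn : (0:ℝ) ≤ ∑ j ∈ Finset.range (J + 1),
        (((j : ℝ) + 1) * ((j : ℝ) + 2)) * ‖∑ n ∈ dint j, u n‖ ^ 2 :=
      Finset.sum_nonneg fun j _ => by positivity
    have hsumnn : (0:ℝ) ≤ ∑ j ∈ Finset.range (J + 1), ‖∑ n ∈ dint j, u n‖ :=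
      Finset.sum_nonneg fun j _ => norm_nonneg _
    have hB2 : ‖B‖ ^ 2 ≤ (∑ j ∈ Finset.range (J + 1), ‖∑ n ∈ dint j, u n‖) ^ 2 := by
      have := norm_nonneg B
      nlinarith
    calc ‖B‖ ^ 2 ≤ (∑ j ∈ Finset.range (J + 1), ‖∑ n ∈ dint j, u n‖) ^ 2 := hB2
      _ ≤ (∑ j ∈ Finset.range (J + 1), (((j : ℝ) + 1) * ((j : ℝ) + 2))⁻¹)
            * ∑ j ∈ Finset.range (J + 1), (((j : ℝ) + 1) * ((j : ℝ) + 2)) * ‖∑ n ∈ dint j, u n‖ ^ 2 := hcs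
      _ ≤ 1 * ∑ j ∈ Finset.range (J + 1), (((j : ℝ) + 1) * ((j : ℝ) + 2)) * ‖∑ n ∈ dint j, u n‖ ^ 2 :=
          mul_le_mul_of_nonneg_right hw1 hnn
      _ = ∑ j ∈ Finset.range (J + 1), (((j : ℝ) + 1) * ((j : ℝ) + 2)) * ‖∑ n ∈ dint j, u n‖ ^ 2 := one_mul _
      _ ≤ ∑ j ∈ Finset.range (K + 1), (((j : ℝ) + 1) * ((j : ℝ) + 2)) * ‖∑ n ∈ dint j, u n‖ ^ 2 :=
          Finset.sum_le_sum_of_subset_of_nonneg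
            (Finset.range_subset_range.mpr (by omega)) (fun j _ _ => by positivity)
  -- bound for the remainder R
  have hRbound : ‖R‖ ^ 2
      ≤ ∑ j ∈ Finset.range (K + 1), ∑ k ∈ Finset.Ico 2 (Mx + 2),
          ((j + Nat.log 2 k : ℕ) : ℝ) * ‖∑ n ∈ cell j k, u n‖ ^ 2 := by
    have htri : ‖R‖ ≤ ∑ j ∈ bits, ‖∑ n ∈ blk m j, u n‖ := norm_sum_le _ _
    have hcard : (bits.card : ℝ) ≤ (J : ℝ) := by
      have h1 : bits.card ≤ J := by
        calc bits.card ≤ (Finset.range J).card := Finset.card_le_card (Finset.filter_subset _ _)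
        _ = J := Finset.card_range J
      exact_mod_cast h1
    have hcs : (∑ j ∈ bits, ‖∑ n ∈ blk m j, u n‖) ^ 2
        ≤ (bits.card : ℝ) * ∑ j ∈ bits, ‖∑ n ∈ blk m j, u n‖ ^ 2 :=
      sq_sum_le_card_mul_sum_sq
    have hsumnn : (0:ℝ) ≤ ∑ j ∈ bits, ‖∑ n ∈ blk m j, u n‖ :=
      Finset.sum_nonneg fun j _ => norm_nonneg _
    have hRs : ‖R‖ ^ 2 ≤ (J : ℝ) * ∑ j ∈ bits, ‖∑ n ∈ blk m j, u n‖ ^ 2 := by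
      have hnn2 : (0:ℝ) ≤ ∑ j ∈ bits, ‖∑ n ∈ blk m j, u n‖ ^ 2 :=
        Finset.sum_nonneg fun j _ => sq_nonneg _
      have h0 := norm_nonneg R
      nlinarith [mul_le_mul_of_nonneg_right hcard hnn2]
    have hstep : ∀ j ∈ bits, (J : ℝ) * ‖∑ n ∈ blk m j, u n‖ ^ 2
        ≤ ∑ k ∈ Finset.Ico 2 (Mx + 2), ((j + Nat.log 2 k : ℕ) : ℝ) * ‖∑ n ∈ cell j k, u n‖ ^ 2 := by
      intro j hj
      have hjmem := Finset.mem_filter.mp hj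
      have hjJ : j < J := Finset.mem_range.mp hjmem.1
      set q := m / 2 ^ (j + 1) with hq
      set k₀ := 2 * q with hk₀
      have hblk : blk m j = cell j k₀ := by
        unfold blk cell
        have he : 2 ^ (j + 1) * q = k₀ * 2 ^ j := by
          rw [hk₀, pow_succ]
          ring
        rw [he]
      have hq1 : 2 ^ (J - (j + 1)) ≤ q := by
        rw [hq]
        calc 2 ^ (J - (j + 1)) = 2 ^ J / 2 ^ (j + 1) := by
              rw [Nat.pow_div (by omega) (by norm_num)]
        _ ≤ m / 2 ^ (j + 1) := Nat.div_le_div_right h2J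
      have hone : 1 ≤ 2 ^ (J - (j + 1)) := Nat.one_le_two_pow
      have hk2 : 2 ≤ k₀ := by omega
      have hkle : k₀ * 2 ^ j ≤ m := by
        calc k₀ * 2 ^ j = 2 ^ (j + 1) * q := by rw [hk₀, pow_succ]; ring
        _ ≤ m := by rw [hq, mul_comm]; exact Nat.div_mul_le_self m (2 ^ (j + 1))
      have hkM : k₀ < Mx + 2 := by
        have h2 : k₀ ≤ k₀ * 2 ^ j := Nat.le_mul_of_pos_right _ (Nat.pow_pos (by norm_num))
        omega
      have hlogk : J - j ≤ Nat.log 2 k₀ := by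
        apply (Nat.le_log_iff_pow_le (by norm_num) (by omega)).mpr
        calc 2 ^ (J - j) = 2 * 2 ^ (J - (j + 1)) := by
              rw [← pow_succ']
              congr 1
              omega
        _ ≤ 2 * q := by omega
      have hJle : (J : ℝ) ≤ ((j + Nat.log 2 k₀ : ℕ) : ℝ) := by
        have : J ≤ j + Nat.log 2 k₀ := by omega
        exact_mod_cast this
      have hmem : k₀ ∈ Finset.Ico 2 (Mx + 2) := Finset.mem_Ico.mpr ⟨hk2, hkM⟩
      calc (J : ℝ) * ‖∑ n ∈ blk m j, u n‖ ^ 2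
          ≤ ((j + Nat.log 2 k₀ : ℕ) : ℝ) * ‖∑ n ∈ cell j k₀, u n‖ ^ 2 := by
            rw [hblk]
            exact mul_le_mul_of_nonneg_right hJle (sq_nonneg _)
        _ ≤ ∑ k ∈ Finset.Ico 2 (Mx + 2), ((j + Nat.log 2 k : ℕ) : ℝ) * ‖∑ n ∈ cell j k, u n‖ ^ 2 :=
            Finset.single_le_sum
              (f := fun k => ((j + Nat.log 2 k : ℕ) : ℝ) * ‖∑ n ∈ cell j k, u n‖ ^ 2)
              (fun k _ => by positivity) hmem
    calc ‖R‖ ^ 2 ≤ (J : ℝ) * ∑ j ∈ bits, ‖∑ n ∈ blk m j, u n‖ ^ 2 := hRs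
      _ = ∑ j ∈ bits, (J : ℝ) * ‖∑ n ∈ blk m j, u n‖ ^ 2 := Finset.mul_sum _ _ _
      _ ≤ ∑ j ∈ bits, ∑ k ∈ Finset.Ico 2 (Mx + 2),
            ((j + Nat.log 2 k : ℕ) : ℝ) * ‖∑ n ∈ cell j k, u n‖ ^ 2 := Finset.sum_le_sum hstep
      _ ≤ ∑ j ∈ Finset.range (K + 1), ∑ k ∈ Finset.Ico 2 (Mx + 2),
            ((j + Nat.log 2 k : ℕ) : ℝ) * ‖∑ n ∈ cell j k, u n‖ ^ 2 := by
          refine Finset.sum_le_sum_of_subset_of_nonneg ?_ (fun j _ _ => ?_)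
          · intro j hj
            have hjJ : j < J := Finset.mem_range.mp (Finset.mem_of_mem_filter j hj)
            exact Finset.mem_range.mpr (by omega)
          · exact Finset.sum_nonneg fun k _ => by positivity
  linarith

end Pointwise

end MenshovRademacherAux

section MainAux

open MenshovRademacherAux Finset

variable {X : Type*} [MeasurableSpace X] {μ : Measure X}
  {𝕜 : Type*} [RCLike 𝕜] {H : Type*} [NormedAddCommGroup H] [InnerProductSpace 𝕜 H]

local notation "⟪" x ", " y "⟫" => @inner 𝕜 _ _ x y

lemma integrable_inner_of_memLp {f g : X → H} (hf : MemLp f 2 μ) (hg : MemLp g 2 μ) :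
    Integrable (fun x => (⟪f x, g x⟫ : 𝕜)) μ := by
  have h := MeasureTheory.L2.integrable_inner (𝕜 := 𝕜) (hf.toLp f) (hg.toLp g)
  refine h.congr ?_
  filter_upwards [hf.coeFn_toLp, hg.coeFn_toLp] with x h1 h2
  rw [h1, h2]

variable (a : ℕ → 𝕜) (φ : ℕ → X → H)

lemma blocksum_memLp (hmem : ∀ n, 1 ≤ n → MemLp (φ n) 2 μ)
    (s : Finset ℕ) (hs : ∀ n ∈ s, 1 ≤ n) :
    MemLp (fun x => ∑ n ∈ s, a n • φ n x) 2 μ :=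
  memLp_finset_sum s fun n hn => ((hmem n (hs n hn)).const_smul (a n))

lemma lintegral_sq_block (hmem : ∀ n, 1 ≤ n → MemLp (φ n) 2 μ)
    (horth : ∀ n m, 1 ≤ n → 1 ≤ m →
      ∫ x, (inner 𝕜 (φ n x) (φ m x) : 𝕜) ∂μ = if n = m then (1 : 𝕜) else 0)
    (s : Finset ℕ) (hs : ∀ n ∈ s, 1 ≤ n) :
    ∫⁻ x, ENNReal.ofReal (‖∑ n ∈ s, a n • φ n x‖ ^ 2) ∂μ
      = ENNReal.ofReal (∑ n ∈ s, ‖a n‖ ^ 2) := by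
  classical
  have hterm : ∀ n ∈ s, MemLp (fun x => a n • φ n x) 2 μ :=
    fun n hn => (hmem n (hs n hn)).const_smul (a n)
  have hT : MemLp (fun x => ∑ n ∈ s, a n • φ n x) 2 μ := memLp_finset_sum s hterm
  have hint : ∀ n ∈ s, ∀ m' ∈ s,
      Integrable (fun x => (⟪a n • φ n x, a m' • φ m' x⟫ : 𝕜)) μ :=
    fun n hn m' hm' => integrable_inner_of_memLp (hterm n hn) (hterm m' hm')
  have hIff : Integrable (fun x => (⟪∑ n ∈ s, a n • φ n x, ∑ n ∈ s, a n • φ n x⟫ : 𝕜)) μ :=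
    integrable_inner_of_memLp hT hT
  have hnormsq : ∀ x, ‖∑ n ∈ s, a n • φ n x‖ ^ 2
      = RCLike.re (⟪∑ n ∈ s, a n • φ n x, ∑ n ∈ s, a n • φ n x⟫ : 𝕜) :=
    fun x => (inner_self_eq_norm_sq _).symm
  have hInt2 : Integrable (fun x => ‖∑ n ∈ s, a n • φ n x‖ ^ 2) μ :=
    hIff.re.congr (Filter.Eventually.of_forall fun x => (hnormsq x).symm)
  have hval : ∫ x, (⟪∑ n ∈ s, a n • φ n x, ∑ n ∈ s, a n • φ n x⟫ : 𝕜) ∂μ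
      = ((∑ n ∈ s, ‖a n‖ ^ 2 : ℝ) : 𝕜) := by
    have hexp : ∀ x, (⟪∑ n ∈ s, a n • φ n x, ∑ n ∈ s, a n • φ n x⟫ : 𝕜)
        = ∑ n ∈ s, ∑ m' ∈ s, (⟪a n • φ n x, a m' • φ m' x⟫ : 𝕜) := by
      intro x
      rw [sum_inner]
      exact Finset.sum_congr rfl fun n _ => inner_sum _ _ _
    rw [integral_congr_ae (Filter.Eventually.of_forall hexp)]
    rw [integral_finset_sum s (fun n hn => integrable_finset_sum s (fun m' hm' => hint n hn m' hm'))]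
    have hswap : ∀ n ∈ s, ∫ x, ∑ m' ∈ s, (⟪a n • φ n x, a m' • φ m' x⟫ : 𝕜) ∂μ
        = ∑ m' ∈ s, ∫ x, (⟪a n • φ n x, a m' • φ m' x⟫ : 𝕜) ∂μ :=
      fun n hn => integral_finset_sum s (hint n hn)
    rw [Finset.sum_congr rfl hswap]
    have hone : ∀ n ∈ s, ∀ m' ∈ s, ∫ x, (⟪a n • φ n x, a m' • φ m' x⟫ : 𝕜) ∂μ
        = (starRingEnd 𝕜) (a n) * a m' * (if n = m' then (1:𝕜) else 0) := by
      intro n hn m' hm'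
      have hre : (fun x => (⟪a n • φ n x, a m' • φ m' x⟫ : 𝕜))
          = fun x => (starRingEnd 𝕜) (a n) * a m' * (⟪φ n x, φ m' x⟫ : 𝕜) := by
        funext x
        rw [inner_smul_left, inner_smul_right]
        ring
      rw [hre]
      rw [integral_const_mul, horth n m' (hs n hn) (hs m' hm')]
    rw [Finset.sum_congr rfl (fun n hn => Finset.sum_congr rfl (fun m' hm' => hone n hn m' hm'))]
    have hdiag : ∀ n ∈ s, ∑ m' ∈ s, (starRingEnd 𝕜) (a n) * a m' * (if n = m' then (1:𝕜) else 0)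
        = ((‖a n‖ ^ 2 : ℝ) : 𝕜) := by
      intro n hn
      rw [Finset.sum_eq_single_of_mem n hn]
      · rw [if_pos rfl, mul_one, RCLike.conj_mul]
        push_cast
        ring
      · intro m' _ hne
        rw [if_neg (Ne.symm hne), mul_zero]
    rw [Finset.sum_congr rfl hdiag]
    push_cast
    ring
  have h1 : ∫ x, ‖∑ n ∈ s, a n • φ n x‖ ^ 2 ∂μ = ∑ n ∈ s, ‖a n‖ ^ 2 := by
    rw [integral_congr_ae (Filter.Eventually.of_forall hnormsq), integral_re hIff, hval,
      RCLike.ofReal_re]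
  rw [← ofReal_integral_eq_lintegral_ofReal hInt2
    (Filter.Eventually.of_forall fun x => sq_nonneg _), h1]

lemma lintegral_weighted {ι : Type*} (hmem : ∀ n, 1 ≤ n → MemLp (φ n) 2 μ)
    (horth : ∀ n m, 1 ≤ n → 1 ≤ m →
      ∫ x, (inner 𝕜 (φ n x) (φ m x) : 𝕜) ∂μ = if n = m then (1 : 𝕜) else 0)
    (s : Finset ι) (c : ι → ℝ) (hc : ∀ i, 0 ≤ c i) (F : ι → Finset ℕ)
    (hF : ∀ i, ∀ n ∈ F i, 1 ≤ n) :
    ∫⁻ x, ENNReal.ofReal (∑ i ∈ s, c i * ‖∑ n ∈ F i, a n • φ n x‖ ^ 2) ∂μ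
      = ENNReal.ofReal (∑ i ∈ s, c i * ∑ n ∈ F i, ‖a n‖ ^ 2) := by
  classical
  have hsum : ∀ x, ENNReal.ofReal (∑ i ∈ s, c i * ‖∑ n ∈ F i, a n • φ n x‖ ^ 2)
      = ∑ i ∈ s, ENNReal.ofReal (c i * ‖∑ n ∈ F i, a n • φ n x‖ ^ 2) :=
    fun x => ENNReal.ofReal_sum_of_nonneg (fun i _ => mul_nonneg (hc i) (sq_nonneg _))
  simp only [hsum]
  rw [lintegral_finset_sum' s (fun i _ => ?_)]
  · have hper : ∀ i ∈ s, ∫⁻ x, ENNReal.ofReal (c i * ‖∑ n ∈ F i, a n • φ n x‖ ^ 2) ∂μ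
        = ENNReal.ofReal (c i * ∑ n ∈ F i, ‖a n‖ ^ 2) := by
      intro i _
      have h1 : ∀ x, ENNReal.ofReal (c i * ‖∑ n ∈ F i, a n • φ n x‖ ^ 2)
          = ENNReal.ofReal (c i) * ENNReal.ofReal (‖∑ n ∈ F i, a n • φ n x‖ ^ 2) :=
        fun x => ENNReal.ofReal_mul (hc i)
      simp only [h1]
      rw [lintegral_const_mul' _ _ ENNReal.ofReal_ne_top,
        lintegral_sq_block a φ hmem horth (F i) (hF i), ← ENNReal.ofReal_mul (hc i)]
    rw [Finset.sum_congr rfl hper,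
      ← ENNReal.ofReal_sum_of_nonneg
        (fun i _ => mul_nonneg (hc i) (Finset.sum_nonneg fun n _ => sq_nonneg _))]
  · have hsm : AEStronglyMeasurable (fun x => ∑ n ∈ F i, a n • φ n x) μ :=
      (blocksum_memLp a φ hmem (F i) (hF i)).1
    exact ENNReal.measurable_ofReal.comp_aemeasurable
      (aemeasurable_const.mul ((hsm.norm.aemeasurable).pow_const 2))

end MainAux

open MenshovRademacherAux Finset

/-- General Menshov–Rademacher theorem: bound on the majorant of partial sums. -/
theorem menshov_rademacher_majorant_bound
    {X : Type*} [MeasurableSpace X] (μ : Measure X)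
    {𝕜 : Type*} [RCLike 𝕜]
    {H : Type*} [NormedAddCommGroup H] [InnerProductSpace 𝕜 H] [CompleteSpace H]
    (a : ℕ → 𝕜) (φ : ℕ → X → H)
    (hmem : ∀ n, 1 ≤ n → MemLp (φ n) 2 μ)
    (horth : ∀ n m, 1 ≤ n → 1 ≤ m →
      ∫ x, (inner 𝕜 (φ n x) (φ m x) : 𝕜) ∂μ = if n = m then (1 : 𝕜) else 0)
    (hL : Summable fun n : ℕ => ‖a (n + 1)‖ ^ 2 * (Real.logb 2 ((n : ℝ) + 2)) ^ 2) :
    (∫⁻ x, (⨆ m : ℕ, (‖∑ n ∈ Finset.Icc 1 (m + 1), a n • φ n x‖₊ : ℝ≥0∞)) ^ 2 ∂μ) ^ (1 / 2 : ℝ)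
      ≤ ENNReal.ofReal
          (4 * Real.sqrt (∑' n : ℕ, ‖a (n + 1)‖ ^ 2 * (Real.logb 2 ((n : ℝ) + 2)) ^ 2)) := by
  classical
  set L : ℝ := ∑' n : ℕ, ‖a (n + 1)‖ ^ 2 * (Real.logb 2 ((n : ℝ) + 2)) ^ 2 with hLdef
  have hL0 : 0 ≤ L := tsum_nonneg fun n => by positivity
  -- partial sums of the weighted coefficient series are bounded by `L`
  have hpartial : ∀ N : ℕ,
      ∑ n ∈ Finset.Ioc 0 N, ‖a n‖ ^ 2 * Real.logb 2 ((n : ℝ) + 1) ^ 2 ≤ L := by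
    intro N
    have h1 : Finset.Ioc (0:ℕ) N = Finset.Ico 1 (N + 1) := by
      ext n
      simp [Nat.lt_succ_iff, Nat.succ_le_iff]
    rw [h1, Finset.sum_Ico_eq_sum_range]
    have h2 : ∀ i ∈ Finset.range (N + 1 - 1),
        ‖a (1 + i)‖ ^ 2 * Real.logb 2 (((1 + i : ℕ) : ℝ) + 1) ^ 2
          = ‖a (i + 1)‖ ^ 2 * (Real.logb 2 ((i : ℝ) + 2)) ^ 2 := by
      intro i _
      rw [add_comm 1 i]
      push_cast
      rw [add_assoc]
      norm_num
    rw [Finset.sum_congr rfl h2]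
    exact Summable.sum_le_tsum _ (fun i _ => by positivity) hL
  have hIoc1 : ∀ (s : Finset ℕ) (h : ∃ c, s = Finset.Ioc 0 c), True := fun _ _ => trivial
  clear hIoc1
  -- the partial sums and their squared sup
  set G : ℕ → X → ℝ≥0∞ :=
    fun m x => (‖∑ n ∈ Finset.Ioc 0 (m + 1), a n • φ n x‖₊ : ℝ≥0∞) ^ 2 with hG
  have hGmeas : ∀ m, AEMeasurable (G m) μ := by
    intro m
    have hsm : AEStronglyMeasurable (fun x => ∑ n ∈ Finset.Ioc 0 (m + 1), a n • φ n x) μ :=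
      (blocksum_memLp a φ hmem _ (fun n hn => (Finset.mem_Ioc.mp hn).1)).1
    exact hsm.enorm.pow_const 2
  have hIcc : ∀ (m : ℕ) (x : X), ∑ n ∈ Finset.Icc 1 (m + 1), a n • φ n x
      = ∑ n ∈ Finset.Ioc 0 (m + 1), a n • φ n x := by
    intro m x
    congr 1
  have hintegrand : ∀ x, (⨆ m : ℕ, (‖∑ n ∈ Finset.Icc 1 (m + 1), a n • φ n x‖₊ : ℝ≥0∞)) ^ 2
      = ⨆ M : ℕ, ⨆ m : ℕ, G (min m M) x := by
    intro x
    have h1 : (⨆ m : ℕ, (‖∑ n ∈ Finset.Icc 1 (m + 1), a n • φ n x‖₊ : ℝ≥0∞))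
        = ⨆ m : ℕ, (‖∑ n ∈ Finset.Ioc 0 (m + 1), a n • φ n x‖₊ : ℝ≥0∞) :=
      iSup_congr fun m => by rw [hIcc m x]
    rw [h1]
    have h2 : (⨆ m : ℕ, (‖∑ n ∈ Finset.Ioc 0 (m + 1), a n • φ n x‖₊ : ℝ≥0∞)) ^ 2
        = ⨆ m : ℕ, G m x := by
      apply le_antisymm
      · rw [pow_two, ENNReal.iSup_mul]
        refine iSup_le fun i => ?_
        rw [ENNReal.mul_iSup]
        refine iSup_le fun j => ?_
        rcases le_total (‖∑ n ∈ Finset.Ioc 0 (i + 1), a n • φ n x‖₊ : ℝ≥0∞)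
            (‖∑ n ∈ Finset.Ioc 0 (j + 1), a n • φ n x‖₊ : ℝ≥0∞) with hle | hle
        · refine le_trans (mul_le_mul' hle le_rfl) ?_
          refine le_trans (le_of_eq (pow_two _).symm) ?_
          exact le_iSup (fun m => G m x) j
        · refine le_trans (mul_le_mul' le_rfl hle) ?_
          refine le_trans (le_of_eq (pow_two _).symm) ?_
          exact le_iSup (fun m => G m x) i
      · refine iSup_le fun m => ?_
        have hle : (‖∑ n ∈ Finset.Ioc 0 (m + 1), a n • φ n x‖₊ : ℝ≥0∞)
            ≤ ⨆ m' : ℕ, (‖∑ n ∈ Finset.Ioc 0 (m' + 1), a n • φ n x‖₊ : ℝ≥0∞) :=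
          le_iSup (fun m' => (‖∑ n ∈ Finset.Ioc 0 (m' + 1), a n • φ n x‖₊ : ℝ≥0∞)) m
        exact pow_le_pow_left' hle 2
    rw [h2]
    apply le_antisymm
    · refine iSup_le fun m => ?_
      refine le_iSup_of_le m (le_iSup_of_le m ?_)
      rw [min_self]
    · exact iSup_le fun M => iSup_le fun m => le_iSup (fun m' => G m' x) (min m M)
  have hmono : ∀ᵐ x ∂μ, Monotone fun M => ⨆ m, G (min m M) x := by
    refine Filter.Eventually.of_forall fun x M M' h => iSup_le fun m => ?_
    have he : min m M = min (min m M) M' := (min_eq_left (le_trans (min_le_right m M) h)).symm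
    exact le_iSup_of_le (min m M) (le_of_eq (congrArg (fun t => G t x) he))
  have hFmeas : ∀ M, AEMeasurable (fun x => ⨆ m, G (min m M) x) μ :=
    fun M => AEMeasurable.iSup (fun m => hGmeas (min m M))
  -- the crucial uniform bound
  have hkey : ∀ M : ℕ, ∫⁻ x, (⨆ m, G (min m M) x) ∂μ ≤ ENNReal.ofReal (16 * L) := by
    intro M
    set K := Nat.log 2 (M + 1) with hKdef
    set Pc : ℕ → ℝ := fun j => 2 * (((j : ℝ) + 1) * ((j : ℝ) + 2)) with hPc
    set Qc : ℕ × ℕ → ℝ := fun p => 2 * ((p.1 + Nat.log 2 p.2 : ℕ) : ℝ) with hQc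
    have hPc0 : ∀ j, 0 ≤ Pc j := fun j => by rw [hPc]; positivity
    have hQc0 : ∀ p, 0 ≤ Qc p := fun p => by rw [hQc]; positivity
    have hdint1 : ∀ j, ∀ n ∈ dint j, 1 ≤ n := by
      intro j n hn
      exact lt_of_le_of_lt (Nat.zero_le _) (Finset.mem_Ioc.mp hn).1
    have hcell1 : ∀ p : ℕ × ℕ, ∀ n ∈ cell p.1 p.2, 1 ≤ n := by
      intro p n hn
      exact lt_of_le_of_lt (Nat.zero_le _) (Finset.mem_Ioc.mp hn).1
    have hPint := lintegral_weighted a φ hmem horth (Finset.range (K + 1)) Pc hPc0 dint hdint1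
    have hQint := lintegral_weighted a φ hmem horth
        ((Finset.range (K + 1)) ×ˢ (Finset.Ico 2 (M + 2))) Qc hQc0
        (fun p => cell p.1 p.2) hcell1
    have hPmeas : AEMeasurable (fun x => ENNReal.ofReal
        (∑ j ∈ Finset.range (K + 1), Pc j * ‖∑ n ∈ dint j, a n • φ n x‖ ^ 2)) μ := by
      apply ENNReal.measurable_ofReal.comp_aemeasurable
      apply Finset.aemeasurable_fun_sum
      intro j _
      have hsm : AEStronglyMeasurable (fun x => ∑ n ∈ dint j, a n • φ n x) μ :=
        (blocksum_memLp a φ hmem _ (hdint1 j)).1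
      exact aemeasurable_const.mul ((hsm.norm.aemeasurable).pow_const 2)
    -- pointwise domination
    have hpoint : ∀ x, (⨆ m, G (min m M) x)
        ≤ ENNReal.ofReal (∑ j ∈ Finset.range (K + 1), Pc j * ‖∑ n ∈ dint j, a n • φ n x‖ ^ 2)
          + ENNReal.ofReal (∑ p ∈ (Finset.range (K + 1)) ×ˢ (Finset.Ico 2 (M + 2)),
              Qc p * ‖∑ n ∈ cell p.1 p.2, a n • φ n x‖ ^ 2) := by
      intro x
      refine iSup_le fun m0 => ?_
      have hb := pointwise_bound (fun n => a n • φ n x) M (min m0 M + 1) (by omega)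
        (by have : min m0 M ≤ M := min_le_right m0 M; omega)
      have hGx : G (min m0 M) x
          = ENNReal.ofReal (‖∑ n ∈ Finset.Ioc 0 (min m0 M + 1), a n • φ n x‖ ^ 2) := by
        rw [hG]
        simp only []
        rw [← enorm_eq_nnnorm, ← ofReal_norm, ← ENNReal.ofReal_pow (norm_nonneg _)]
      rw [hGx]
      have hP0 : (0:ℝ) ≤ ∑ j ∈ Finset.range (K + 1), Pc j * ‖∑ n ∈ dint j, a n • φ n x‖ ^ 2 :=
        Finset.sum_nonneg fun j _ => mul_nonneg (hPc0 j) (sq_nonneg _)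
      have hQ0 : (0:ℝ) ≤ ∑ p ∈ (Finset.range (K + 1)) ×ˢ (Finset.Ico 2 (M + 2)),
          Qc p * ‖∑ n ∈ cell p.1 p.2, a n • φ n x‖ ^ 2 :=
        Finset.sum_nonneg fun p _ => mul_nonneg (hQc0 p) (sq_nonneg _)
      rw [← ENNReal.ofReal_add hP0 hQ0]
      refine ENNReal.ofReal_le_ofReal ?_
      have hP2 : 2 * (∑ j ∈ Finset.range (Nat.log 2 (M + 1) + 1),
            (((j : ℝ) + 1) * ((j : ℝ) + 2)) * ‖∑ n ∈ dint j, a n • φ n x‖ ^ 2)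
          = ∑ j ∈ Finset.range (K + 1), Pc j * ‖∑ n ∈ dint j, a n • φ n x‖ ^ 2 := by
        rw [Finset.mul_sum]
        exact Finset.sum_congr rfl fun j _ => by rw [hPc]; ring
      have hQ2 : 2 * (∑ j ∈ Finset.range (Nat.log 2 (M + 1) + 1),
            ∑ k ∈ Finset.Ico 2 (M + 2),
              ((j + Nat.log 2 k : ℕ) : ℝ) * ‖∑ n ∈ cell j k, a n • φ n x‖ ^ 2)
          = ∑ p ∈ (Finset.range (K + 1)) ×ˢ (Finset.Ico 2 (M + 2)),
              Qc p * ‖∑ n ∈ cell p.1 p.2, a n • φ n x‖ ^ 2 := by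
        rw [Finset.sum_product, Finset.mul_sum]
        refine Finset.sum_congr rfl fun j _ => ?_
        rw [Finset.mul_sum]
        exact Finset.sum_congr rfl fun k _ => by rw [hQc]; ring
      rw [← hP2, ← hQ2]
      exact hb
    -- real-side estimates
    have hPle : ∑ j ∈ Finset.range (K + 1), Pc j * ∑ n ∈ dint j, ‖a n‖ ^ 2 ≤ 14 * L := by
      have step1 : ∀ j ∈ Finset.range (K + 1), Pc j * ∑ n ∈ dint j, ‖a n‖ ^ 2
          ≤ ∑ n ∈ dint j, 14 * Real.logb 2 ((n : ℝ) + 1) ^ 2 * ‖a n‖ ^ 2 := by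
        intro j _
        rw [Finset.mul_sum]
        refine Finset.sum_le_sum fun n hn => ?_
        have hw := P_weight hn
        have h0 : (0:ℝ) ≤ ‖a n‖ ^ 2 := sq_nonneg _
        rw [hPc]
        exact mul_le_mul_of_nonneg_right hw h0
      calc ∑ j ∈ Finset.range (K + 1), Pc j * ∑ n ∈ dint j, ‖a n‖ ^ 2
          ≤ ∑ j ∈ Finset.range (K + 1), ∑ n ∈ dint j,
              14 * Real.logb 2 ((n : ℝ) + 1) ^ 2 * ‖a n‖ ^ 2 := Finset.sum_le_sum step1
        _ = ∑ n ∈ Finset.Ioc 0 ((2 : ℕ) ^ K), 14 * Real.logb 2 ((n : ℝ) + 1) ^ 2 * ‖a n‖ ^ 2 :=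
            (sum_dint (fun n : ℕ => 14 * Real.logb 2 ((n : ℝ) + 1) ^ 2 * ‖a n‖ ^ 2) K).symm
        _ = 14 * ∑ n ∈ Finset.Ioc 0 ((2 : ℕ) ^ K), ‖a n‖ ^ 2 * Real.logb 2 ((n : ℝ) + 1) ^ 2 := by
            rw [Finset.mul_sum]
            exact Finset.sum_congr rfl fun n _ => by ring
        _ ≤ 14 * L := by
            have := hpartial (2 ^ K)
            linarith
    have hQle : ∑ p ∈ (Finset.range (K + 1)) ×ˢ (Finset.Ico 2 (M + 2)),
        Qc p * ∑ n ∈ cell p.1 p.2, ‖a n‖ ^ 2 ≤ 2 * L := by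
      have hNB : ∀ j ∈ Finset.range (K + 1), ∀ k ∈ Finset.Ico 2 (M + 2),
          cell j k ⊆ Finset.Ioc 0 ((M + 2) * 2 ^ K) := by
        intro j hj k hk n hn
        obtain ⟨h1, h2⟩ := Finset.mem_Ioc.mp hn
        refine Finset.mem_Ioc.mpr ⟨lt_of_le_of_lt (Nat.zero_le _) h1, ?_⟩
        have hjK : j ≤ K := by
          have := Finset.mem_range.mp hj
          omega
        have hkM : k + 1 ≤ M + 2 := by
          have := (Finset.mem_Ico.mp hk).2
          omega
        calc n ≤ k * 2 ^ j + 2 ^ j := h2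
          _ = (k + 1) * 2 ^ j := by ring
          _ ≤ (M + 2) * 2 ^ K := Nat.mul_le_mul hkM (Nat.pow_le_pow_right (by norm_num) hjK)
      have hq := Q_sum_le (fun n => ‖a n‖ ^ 2) (fun n => sq_nonneg _) K M ((M + 2) * 2 ^ K) hNB
      have hflat : ∑ p ∈ (Finset.range (K + 1)) ×ˢ (Finset.Ico 2 (M + 2)),
          Qc p * ∑ n ∈ cell p.1 p.2, ‖a n‖ ^ 2
          = 2 * ∑ j ∈ Finset.range (K + 1), ∑ k ∈ Finset.Ico 2 (M + 2),
              ((j + Nat.log 2 k : ℕ) : ℝ) * ∑ n ∈ cell j k, ‖a n‖ ^ 2 := by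
        rw [Finset.sum_product, Finset.mul_sum]
        refine Finset.sum_congr rfl fun j _ => ?_
        rw [Finset.mul_sum]
        exact Finset.sum_congr rfl fun k _ => by rw [hQc]; ring
      rw [hflat]
      have hstep2 : ∑ n ∈ Finset.Ioc 0 ((M + 2) * 2 ^ K), ((Nat.log 2 (n - 1) : ℝ)) ^ 2 * ‖a n‖ ^ 2
          ≤ ∑ n ∈ Finset.Ioc 0 ((M + 2) * 2 ^ K), ‖a n‖ ^ 2 * Real.logb 2 ((n : ℝ) + 1) ^ 2 := by
        refine Finset.sum_le_sum fun n hn => ?_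
        have hn1 : 1 ≤ n := (Finset.mem_Ioc.mp hn).1
        have := natlog_sq_le n hn1
        have h0 : (0:ℝ) ≤ ‖a n‖ ^ 2 := sq_nonneg _
        calc ((Nat.log 2 (n - 1) : ℝ)) ^ 2 * ‖a n‖ ^ 2
            ≤ Real.logb 2 ((n : ℝ) + 1) ^ 2 * ‖a n‖ ^ 2 := mul_le_mul_of_nonneg_right this h0
          _ = ‖a n‖ ^ 2 * Real.logb 2 ((n : ℝ) + 1) ^ 2 := by ring
      have := hpartial ((M + 2) * 2 ^ K)
      linarith
    calc ∫⁻ x, (⨆ m, G (min m M) x) ∂μ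
        ≤ ∫⁻ x, (ENNReal.ofReal
              (∑ j ∈ Finset.range (K + 1), Pc j * ‖∑ n ∈ dint j, a n • φ n x‖ ^ 2)
            + ENNReal.ofReal (∑ p ∈ (Finset.range (K + 1)) ×ˢ (Finset.Ico 2 (M + 2)),
              Qc p * ‖∑ n ∈ cell p.1 p.2, a n • φ n x‖ ^ 2)) ∂μ := lintegral_mono hpoint
      _ = (∫⁻ x, ENNReal.ofReal
              (∑ j ∈ Finset.range (K + 1), Pc j * ‖∑ n ∈ dint j, a n • φ n x‖ ^ 2) ∂μ)
            + ∫⁻ x, ENNReal.ofReal (∑ p ∈ (Finset.range (K + 1)) ×ˢ (Finset.Ico 2 (M + 2)),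
              Qc p * ‖∑ n ∈ cell p.1 p.2, a n • φ n x‖ ^ 2) ∂μ :=
          lintegral_add_left' hPmeas _
      _ = ENNReal.ofReal (∑ j ∈ Finset.range (K + 1), Pc j * ∑ n ∈ dint j, ‖a n‖ ^ 2)
            + ENNReal.ofReal (∑ p ∈ (Finset.range (K + 1)) ×ˢ (Finset.Ico 2 (M + 2)),
              Qc p * ∑ n ∈ cell p.1 p.2, ‖a n‖ ^ 2) := by rw [hPint, hQint]
      _ ≤ ENNReal.ofReal (14 * L) + ENNReal.ofReal (2 * L) :=
          add_le_add (ENNReal.ofReal_le_ofReal hPle) (ENNReal.ofReal_le_ofReal hQle)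
      _ = ENNReal.ofReal (16 * L) := by
          rw [← ENNReal.ofReal_add (by linarith) (by linarith)]
          congr 1
          ring
  -- put everything together
  have hbig : ∫⁻ x, (⨆ m : ℕ, (‖∑ n ∈ Finset.Icc 1 (m + 1), a n • φ n x‖₊ : ℝ≥0∞)) ^ 2 ∂μ
      ≤ ENNReal.ofReal (16 * L) := by
    rw [lintegral_congr hintegrand, lintegral_iSup' hFmeas hmono]
    exact iSup_le hkey
  have h44 : ENNReal.ofReal (16 * L) ^ (1 / 2 : ℝ) = ENNReal.ofReal (4 * Real.sqrt L) := by
    rw [ENNReal.ofReal_rpow_of_nonneg (by linarith) (by norm_num)]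
    congr 1
    rw [← Real.sqrt_eq_rpow]
    rw [show (16:ℝ) * L = (4 * Real.sqrt L) ^ 2 by rw [mul_pow, Real.sq_sqrt hL0]; norm_num]
    exact Real.sqrt_sq (by positivity)
  calc (∫⁻ x, (⨆ m : ℕ, (‖∑ n ∈ Finset.Icc 1 (m + 1), a n • φ n x‖₊ : ℝ≥0∞)) ^ 2 ∂μ) ^ (1 / 2 : ℝ)
      ≤ ENNReal.ofReal (16 * L) ^ (1 / 2 : ℝ) := ENNReal.rpow_le_rpow hbig (by norm_num)
    _ = ENNReal.ofReal (4 * Real.sqrt L) := h44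
end

section
/- Let N ≥ 1 be an integer, let (ψ_n)_{n=1}^N be a finite orthonormal system in L₂(X, dμ; H), and let (b_n)_{n=1}^N be scalars. Define S*_N(x) := max_{1 ≤ j ≤ N} ‖Σ_{n=1}^j b_n ψ_n(x)‖_H for x ∈ X. Then (∫_X S*_N(x)² dμ(x))^{1/2} ≤ (2 + log₂ N) (Σ_{n=1}^N |b_n|²)^{1/2}. -/
open MeasureTheory Filter
open scoped ENNReal NNReal BigOperators

lemma mr_sq_le_iff (a c : ℝ≥0∞) : a ^ 2 ≤ c ↔ a ≤ c ^ (1/2 : ℝ) := by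
  rw [← ENNReal.rpow_natCast a 2, ← ENNReal.rpow_le_rpow_iff (z := (1/2:ℝ)) (by norm_num),
    ← ENNReal.rpow_mul]
  norm_num

lemma mr_partition (N m l : ℕ) (hN : N ≤ 2 ^ m) (hl : l ≤ m) (g : ℕ → ℝ≥0∞) :
    ∑ k ∈ Finset.range (2 ^ (m - l)),
      ∑ n ∈ Finset.Icc (2 ^ l * k + 1) (2 ^ l * (k + 1)) ∩ Finset.Icc 1 N, g n
      = ∑ n ∈ Finset.Icc 1 N, g n := by
  have hpos : 0 < 2 ^ l := Nat.two_pow_pos l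
  rw [← Finset.sum_fiberwise_of_maps_to (g := fun n => (n - 1) / 2 ^ l)
    (t := Finset.range (2 ^ (m - l))) ?_ g]
  · refine Finset.sum_congr rfl fun k hk => ?_
    congr 1
    ext n
    simp only [Finset.mem_inter, Finset.mem_Icc, Finset.mem_filter]
    constructor
    · rintro ⟨⟨h1, h2⟩, h3, h4⟩
      refine ⟨⟨h3, h4⟩, ?_⟩
      have hc1 : 2 ^ l * k = k * 2 ^ l := mul_comm _ _
      have hc2 : 2 ^ l * (k + 1) = (k + 1) * 2 ^ l := mul_comm _ _
      have hhi : n - 1 < (k + 1) * 2 ^ l := by omega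
      have h5 := (Nat.div_lt_iff_lt_mul hpos).mpr hhi
      have h6 := (Nat.le_div_iff_mul_le hpos).mpr (by omega : k * 2 ^ l ≤ n - 1)
      omega
    · rintro ⟨⟨h3, h4⟩, h5⟩
      refine ⟨⟨?_, ?_⟩, h3, h4⟩
      · have h6 := Nat.div_mul_le_self (n - 1) (2 ^ l)
        rw [h5] at h6
        have hc1 : 2 ^ l * k = k * 2 ^ l := mul_comm _ _
        omega
      · have h6 : n - 1 < ((n - 1) / 2 ^ l + 1) * 2 ^ l :=
          (Nat.div_lt_iff_lt_mul hpos).mp (by omega)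
        rw [h5] at h6
        have hc2 : 2 ^ l * (k + 1) = (k + 1) * 2 ^ l := mul_comm _ _
        omega
  · intro n hn
    rw [Finset.mem_Icc] at hn
    rw [Finset.mem_range, Nat.div_lt_iff_lt_mul hpos, ← pow_add]
    have : m - l + l = m := by omega
    rw [this]
    omega

lemma mr_integrable_inner {X : Type*} [MeasurableSpace X] (μ : Measure X)
    {𝕜 : Type*} [RCLike 𝕜]
    {H : Type*} [NormedAddCommGroup H] [InnerProductSpace 𝕜 H]
    {f g : X → H} (hf : MemLp f 2 μ) (hg : MemLp g 2 μ) :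
    Integrable (fun x => (inner 𝕜 (f x) (g x) : 𝕜)) μ := by
  have := L2.integrable_inner (𝕜 := 𝕜) (hf.toLp f) (hg.toLp g)
  refine this.congr ?_
  filter_upwards [hf.coeFn_toLp, hg.coeFn_toLp] with x h1 h2
  rw [h1, h2]

lemma mr_keyA {X : Type*} [MeasurableSpace X] (μ : Measure X)
    {𝕜 : Type*} [RCLike 𝕜]
    {H : Type*} [NormedAddCommGroup H] [InnerProductSpace 𝕜 H]
    (N : ℕ) (ψ : ℕ → X → H) (b : ℕ → 𝕜)
    (hmem : ∀ n, 1 ≤ n → n ≤ N → MemLp (ψ n) 2 μ)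
    (horth : ∀ n m, 1 ≤ n → n ≤ N → 1 ≤ m → m ≤ N →
      ∫ x, (inner 𝕜 (ψ n x) (ψ m x) : 𝕜) ∂μ = if n = m then (1 : 𝕜) else 0)
    (s : Finset ℕ) (hs : s ⊆ Finset.Icc 1 N) :
    ∫⁻ x, (‖∑ n ∈ s, b n • ψ n x‖₊ : ℝ≥0∞) ^ 2 ∂μ
      = ∑ n ∈ s, ENNReal.ofReal (‖b n‖ ^ 2) := by
  have hmm : ∀ n ∈ s, MemLp (ψ n) 2 μ := by
    intro n hn
    have h := Finset.mem_Icc.mp (hs hn)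
    exact hmem n h.1 h.2
  set f : X → H := fun x => ∑ n ∈ s, b n • ψ n x with hfdef
  have hf : MemLp f 2 μ := by
    have h := memLp_finset_sum' s (fun n hn => (hmm n hn).const_smul (b n))
    convert h using 1
    ext x
    simp [hfdef]
  have hint : ∀ n ∈ s, ∀ m ∈ s, Integrable (fun x => (inner 𝕜 (ψ n x) (ψ m x) : 𝕜)) μ :=
    fun n hn m hm => mr_integrable_inner μ (hmm n hn) (hmm m hm)
  have h1 : ∫ x, (inner 𝕜 (f x) (f x) : 𝕜) ∂μ = ((∑ n ∈ s, ‖b n‖ ^ 2 : ℝ) : 𝕜) := by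
    have hpt : ∀ x, (inner 𝕜 (f x) (f x) : 𝕜)
        = ∑ n ∈ s, ∑ m ∈ s, (starRingEnd 𝕜) (b n) * (b m * (inner 𝕜 (ψ n x) (ψ m x) : 𝕜)) := by
      intro x
      simp only [hfdef, sum_inner, inner_sum, inner_smul_left, inner_smul_right,
        Finset.mul_sum]
      rw [Finset.sum_comm]
      refine Finset.sum_congr rfl fun n _ => Finset.sum_congr rfl fun m _ => by ring
    rw [integral_congr_ae (Filter.Eventually.of_forall hpt)]
    rw [integral_finset_sum s (fun n hn => integrable_finset_sum s
      (fun m hm => ((hint n hn m hm).const_mul _).const_mul _))]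
    have : ∀ n ∈ s, ∫ x, ∑ m ∈ s, (starRingEnd 𝕜) (b n) * (b m * (inner 𝕜 (ψ n x) (ψ m x) : 𝕜)) ∂μ
        = (starRingEnd 𝕜) (b n) * (b n) := by
      intro n hn
      rw [integral_finset_sum s (fun m hm => ((hint n hn m hm).const_mul _).const_mul _)]
      have hn' := Finset.mem_Icc.mp (hs hn)
      have : ∀ m ∈ s, ∫ x, (starRingEnd 𝕜) (b n) * (b m * (inner 𝕜 (ψ n x) (ψ m x) : 𝕜)) ∂μ
          = if n = m then (starRingEnd 𝕜) (b n) * b n else 0 := by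
        intro m hm
        have hm' := Finset.mem_Icc.mp (hs hm)
        rw [integral_const_mul, integral_const_mul, horth n m hn'.1 hn'.2 hm'.1 hm'.2]
        by_cases h : n = m
        · subst h; simp
        · simp [h]
      rw [Finset.sum_congr rfl this]
      simp [Finset.sum_ite_eq s n, hn]
    rw [Finset.sum_congr rfl this]
    push_cast
    refine Finset.sum_congr rfl fun n _ => ?_
    simp [RCLike.conj_mul]
  have h2 : ∫ x, ‖f x‖ ^ 2 ∂μ = ∑ n ∈ s, ‖b n‖ ^ 2 := by
    have : ((∫ x, ‖f x‖ ^ 2 ∂μ : ℝ) : 𝕜) = ((∑ n ∈ s, ‖b n‖ ^ 2 : ℝ) : 𝕜) := by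
      rw [← integral_ofReal, ← h1]
      refine integral_congr_ae (Filter.Eventually.of_forall fun x => ?_)
      show ((((‖f x‖ : ℝ) ^ 2 : ℝ)) : 𝕜) = (inner 𝕜 (f x) (f x) : 𝕜)
      rw [@inner_self_eq_norm_sq_to_K 𝕜]
      push_cast; ring
    exact_mod_cast this
  have h3 : Integrable (fun x => ‖f x‖ ^ 2) μ := by
    have := hf.integrable_norm_rpow two_ne_zero ENNReal.ofNat_ne_top
    simpa [ENNReal.toReal_ofNat, Real.rpow_natCast] using this
  calc ∫⁻ x, (‖f x‖₊ : ℝ≥0∞) ^ 2 ∂μ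
      = ∫⁻ x, ENNReal.ofReal (‖f x‖ ^ 2) ∂μ := by
        refine lintegral_congr fun x => ?_
        rw [ENNReal.ofReal_pow (norm_nonneg _), ofReal_norm, enorm_eq_nnnorm]
    _ = ENNReal.ofReal (∫ x, ‖f x‖ ^ 2 ∂μ) :=
        (ofReal_integral_eq_lintegral_ofReal h3 (Filter.Eventually.of_forall fun x => sq_nonneg _)).symm
    _ = ∑ n ∈ s, ENNReal.ofReal (‖b n‖ ^ 2) := by
        rw [h2, ENNReal.ofReal_sum_of_nonneg (fun n _ => sq_nonneg _)]

/-- General Menshov–Rademacher inequality for a finite orthonormal system. -/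
theorem menshov_rademacher_inequality
    {X : Type*} [MeasurableSpace X] (μ : Measure X)
    {𝕜 : Type*} [RCLike 𝕜]
    {H : Type*} [NormedAddCommGroup H] [InnerProductSpace 𝕜 H] [CompleteSpace H]
    (N : ℕ) (hN : 1 ≤ N) (ψ : ℕ → X → H) (b : ℕ → 𝕜)
    (hmem : ∀ n, 1 ≤ n → n ≤ N → MemLp (ψ n) 2 μ)
    (horth : ∀ n m, 1 ≤ n → n ≤ N → 1 ≤ m → m ≤ N →
      ∫ x, (inner 𝕜 (ψ n x) (ψ m x) : 𝕜) ∂μ = if n = m then (1 : 𝕜) else 0) :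
    (∫⁻ x, (⨆ j ∈ Finset.Icc 1 N,
        (‖∑ n ∈ Finset.Icc 1 j, b n • ψ n x‖₊ : ℝ≥0∞)) ^ 2 ∂μ) ^ (1 / 2 : ℝ)
      ≤ ENNReal.ofReal
          ((2 + Real.logb 2 (N : ℝ)) * Real.sqrt (∑ n ∈ Finset.Icc 1 N, ‖b n‖ ^ 2)) := by
  classical
  set m := Nat.clog 2 N with hm
  have hN2 : N ≤ 2 ^ m := Nat.le_pow_clog one_lt_two N
  set T : ℕ → ℕ → X → H := fun l k x =>
    ∑ n ∈ Finset.Icc (2 ^ l * k + 1) (2 ^ l * (k + 1)) ∩ Finset.Icc 1 N, b n • ψ n x with hT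
  set G : X → ℝ≥0∞ := fun x =>
    ∑ l ∈ Finset.range (m + 1), ∑ k ∈ Finset.range (2 ^ (m - l)),
      (‖T l k x‖₊ : ℝ≥0∞) ^ 2 with hG
  -- Step 1: pointwise bound
  have hpt : ∀ x : X, (⨆ j ∈ Finset.Icc 1 N,
      (‖∑ n ∈ Finset.Icc 1 j, b n • ψ n x‖₊ : ℝ≥0∞)) ^ 2
      ≤ ((m : ℝ≥0∞) + 1) * G x := by
    intro x
    rw [mr_sq_le_iff]
    refine iSup₂_le fun j hj => ?_
    rw [← mr_sq_le_iff]
    obtain ⟨hj1, hjN⟩ := Finset.mem_Icc.mp hj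
    set e : ℕ → ℕ := fun l => 2 ^ l * (j / 2 ^ l) with he
    have he0 : e 0 = j := by simp [he]
    have hetop : e (m + 1) = 0 := by
      have hlt : j < 2 ^ (m + 1) :=
        lt_of_le_of_lt (hjN.trans hN2) (Nat.pow_lt_pow_succ one_lt_two)
      simp [he, Nat.div_eq_of_lt hlt]
    have hel : ∀ l, e l ≤ j := by
      intro l
      calc 2 ^ l * (j / 2 ^ l) = j / 2 ^ l * 2 ^ l := mul_comm _ _
        _ ≤ j := Nat.div_mul_le_self _ _
    have hstep : ∀ l, e l = e (l + 1) + 2 ^ l * ((j / 2 ^ l) % 2) := by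
      intro l
      have h1 : j / 2 ^ (l + 1) = j / 2 ^ l / 2 := by
        rw [Nat.div_div_eq_div_mul, pow_succ]
      have h2 := Nat.div_add_mod (j / 2 ^ l) 2
      calc e l = 2 ^ l * (j / 2 ^ l) := rfl
        _ = 2 ^ l * (2 * (j / 2 ^ l / 2) + (j / 2 ^ l) % 2) := by rw [h2]
        _ = e (l + 1) + 2 ^ l * ((j / 2 ^ l) % 2) := by
            simp only [he, h1, pow_succ, ← Nat.div_div_eq_div_mul]
            ring
    have hmono : ∀ l, e (l + 1) ≤ e l := fun l => by rw [hstep l]; omega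
    have hdecomp : (∑ n ∈ Finset.Icc 1 j, b n • ψ n x)
        = ∑ l ∈ Finset.range (m + 1),
            ∑ n ∈ Finset.Ioc (e (l + 1)) (e l), b n • ψ n x := by
      have key : ∀ l, (∑ n ∈ Finset.Ioc (e (l + 1)) (e l), b n • ψ n x)
          = (∑ n ∈ Finset.Ioc 0 (e l), b n • ψ n x)
            - (∑ n ∈ Finset.Ioc 0 (e (l + 1)), b n • ψ n x) := by
        intro l
        rw [eq_sub_iff_add_eq, add_comm]
        exact Finset.sum_Ioc_consecutive _ (Nat.zero_le _) (hmono l)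
      rw [Finset.sum_congr rfl (fun l _ => key l), Finset.sum_range_sub']
      rw [hetop, he0]
      simp [← Finset.Icc_add_one_left_eq_Ioc]
    have hblock : ∀ l ∈ Finset.range (m + 1),
        ‖∑ n ∈ Finset.Ioc (e (l + 1)) (e l), b n • ψ n x‖ ^ 2
          ≤ ∑ k ∈ Finset.range (2 ^ (m - l)), ‖T l k x‖ ^ 2 := by
      intro l hl
      rcases Nat.mod_two_eq_zero_or_one (j / 2 ^ l) with h2 | h2
      · have heq : e l = e (l + 1) := by rw [hstep l, h2]; simp
        have h0 : (0:ℝ) ≤ ∑ k ∈ Finset.range (2 ^ (m - l)), ‖T l k x‖ ^ 2 :=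
          Finset.sum_nonneg fun i _ => sq_nonneg _
        simpa [heq, Finset.Ioc_self] using h0
      · have hll : l ≤ m := Nat.lt_succ_iff.mp (Finset.mem_range.mp hl)
        have hstep' : e l = e (l + 1) + 2 ^ l := by rw [hstep l, h2, mul_one]
        set k := 2 * (j / 2 ^ (l + 1)) with hk
        have hek : e (l + 1) = 2 ^ l * k := by
          simp only [he, hk, pow_succ]; ring
        have helk : e l = 2 ^ l * (k + 1) := by rw [hstep', hek]; ring
        have helN : 2 ^ l * (k + 1) ≤ N := helk ▸ ((hel l).trans hjN)
        have hkr : k ∈ Finset.range (2 ^ (m - l)) := by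
          rw [Finset.mem_range]
          have h1 : 2 ^ l * (k + 1) ≤ 2 ^ m := helN.trans hN2
          have h2m : 2 ^ l * 2 ^ (m - l) = 2 ^ m := by
            rw [← pow_add]; congr 1; omega
          by_contra hc
          push_neg at hc
          have h3 : 2 ^ l * (2 ^ (m - l) + 1) ≤ 2 ^ l * (k + 1) :=
            Nat.mul_le_mul_left _ (by omega)
          have h4 : 0 < 2 ^ l := Nat.two_pow_pos l
          have h5 : 2 ^ l * (2 ^ (m - l) + 1) = 2 ^ m + 2 ^ l := by
            rw [Nat.mul_add, h2m, mul_one]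
          omega
        have hTeq : (∑ n ∈ Finset.Ioc (e (l + 1)) (e l), b n • ψ n x) = T l k x := by
          rw [hT]
          simp only
          congr 1
          rw [hek, helk]
          ext n
          simp only [Finset.mem_Ioc, Finset.mem_inter, Finset.mem_Icc]
          omega
        rw [hTeq]
        exact Finset.single_le_sum (f := fun k => ‖T l k x‖ ^ 2)
          (fun i _ => sq_nonneg _) hkr
    have hreal : ‖∑ n ∈ Finset.Icc 1 j, b n • ψ n x‖ ^ 2
        ≤ ((m : ℝ) + 1) * ∑ l ∈ Finset.range (m + 1),
            ∑ k ∈ Finset.range (2 ^ (m - l)), ‖T l k x‖ ^ 2 := by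
      rw [hdecomp]
      calc ‖∑ l ∈ Finset.range (m + 1), ∑ n ∈ Finset.Ioc (e (l + 1)) (e l), b n • ψ n x‖ ^ 2
          ≤ (∑ l ∈ Finset.range (m + 1), ‖∑ n ∈ Finset.Ioc (e (l + 1)) (e l), b n • ψ n x‖) ^ 2 := by
            apply pow_le_pow_left₀ (norm_nonneg _) (norm_sum_le _ _)
        _ ≤ (Finset.range (m + 1)).card * ∑ l ∈ Finset.range (m + 1),
              ‖∑ n ∈ Finset.Ioc (e (l + 1)) (e l), b n • ψ n x‖ ^ 2 :=
            sq_sum_le_card_mul_sum_sq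
        _ ≤ ((m : ℝ) + 1) * ∑ l ∈ Finset.range (m + 1),
              ∑ k ∈ Finset.range (2 ^ (m - l)), ‖T l k x‖ ^ 2 := by
            rw [Finset.card_range]
            push_cast
            exact mul_le_mul_of_nonneg_left (Finset.sum_le_sum hblock) (by positivity)
    calc (‖∑ n ∈ Finset.Icc 1 j, b n • ψ n x‖₊ : ℝ≥0∞) ^ 2
        = ENNReal.ofReal (‖∑ n ∈ Finset.Icc 1 j, b n • ψ n x‖ ^ 2) := by
          rw [ENNReal.ofReal_pow (norm_nonneg _), ofReal_norm, enorm_eq_nnnorm]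
      _ ≤ ENNReal.ofReal (((m : ℝ) + 1) * ∑ l ∈ Finset.range (m + 1),
            ∑ k ∈ Finset.range (2 ^ (m - l)), ‖T l k x‖ ^ 2) := ENNReal.ofReal_le_ofReal hreal
      _ = ((m : ℝ≥0∞) + 1) * G x := by
          rw [ENNReal.ofReal_mul (by positivity)]
          congr 1
          · rw [ENNReal.ofReal_add (by positivity) zero_le_one, ENNReal.ofReal_natCast,
              ENNReal.ofReal_one]
          · rw [hG]
            simp only
            rw [ENNReal.ofReal_sum_of_nonneg (fun l _ =>
              Finset.sum_nonneg fun k _ => sq_nonneg _)]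
            refine Finset.sum_congr rfl fun l _ => ?_
            rw [ENNReal.ofReal_sum_of_nonneg (fun k _ => sq_nonneg _)]
            refine Finset.sum_congr rfl fun k _ => ?_
            rw [ENNReal.ofReal_pow (norm_nonneg _), ofReal_norm, enorm_eq_nnnorm]
  -- Step 2: integrate
  have hTm : ∀ l k, MemLp (T l k) 2 μ := by
    intro l k
    have h := memLp_finset_sum'
      (μ := μ) (Finset.Icc (2 ^ l * k + 1) (2 ^ l * (k + 1)) ∩ Finset.Icc 1 N)
      (f := fun n => fun x => b n • ψ n x) (fun n hn => by
        have hn' := Finset.mem_Icc.mp (Finset.mem_inter.mp hn).2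
        exact (hmem n hn'.1 hn'.2).const_smul (b n))
    convert h using 1
    ext x
    simp [hT]
  set B : ℝ≥0∞ := ∑ n ∈ Finset.Icc 1 N, ENNReal.ofReal (‖b n‖ ^ 2) with hB
  have hGint : ∫⁻ x, G x ∂μ = ((m : ℝ≥0∞) + 1) * B := by
    rw [hG]
    simp only
    rw [lintegral_finset_sum' _ (fun l _ => (Finset.aemeasurable_fun_sum _ fun k _ =>
      ((hTm l k).aestronglyMeasurable.enorm).pow_const 2 : AEMeasurable
        (fun x => ∑ k ∈ Finset.range (2 ^ (m - l)), (‖T l k x‖₊ : ℝ≥0∞) ^ 2) μ))]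
    have hinner : ∀ l ∈ Finset.range (m + 1),
        ∑ k ∈ Finset.range (2 ^ (m - l)), ∫⁻ x, (‖T l k x‖₊ : ℝ≥0∞) ^ 2 ∂μ = B := by
      intro l hl
      have hll : l ≤ m := Nat.lt_succ_iff.mp (Finset.mem_range.mp hl)
      have : ∀ k ∈ Finset.range (2 ^ (m - l)), ∫⁻ x, (‖T l k x‖₊ : ℝ≥0∞) ^ 2 ∂μ
          = ∑ n ∈ Finset.Icc (2 ^ l * k + 1) (2 ^ l * (k + 1)) ∩ Finset.Icc 1 N,
              ENNReal.ofReal (‖b n‖ ^ 2) := by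
        intro k _
        exact mr_keyA μ N ψ b hmem horth _ Finset.inter_subset_right
      rw [Finset.sum_congr rfl this, mr_partition N m l hN2 hll]
    calc ∑ l ∈ Finset.range (m + 1), ∫⁻ x, ∑ k ∈ Finset.range (2 ^ (m - l)),
            (‖T l k x‖₊ : ℝ≥0∞) ^ 2 ∂μ
        = ∑ l ∈ Finset.range (m + 1), ∑ k ∈ Finset.range (2 ^ (m - l)),
            ∫⁻ x, (‖T l k x‖₊ : ℝ≥0∞) ^ 2 ∂μ := by
          refine Finset.sum_congr rfl fun l _ => ?_
          exact lintegral_finset_sum' _ (fun k _ =>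
            ((hTm l k).aestronglyMeasurable.enorm).pow_const 2)
      _ = ∑ l ∈ Finset.range (m + 1), B := Finset.sum_congr rfl hinner
      _ = ((m : ℝ≥0∞) + 1) * B := by
          rw [Finset.sum_const, Finset.card_range, nsmul_eq_mul]
          push_cast
          ring
  have hmain : (∫⁻ x, (⨆ j ∈ Finset.Icc 1 N,
      (‖∑ n ∈ Finset.Icc 1 j, b n • ψ n x‖₊ : ℝ≥0∞)) ^ 2 ∂μ)
      ≤ ((m : ℝ≥0∞) + 1) ^ 2 * B := by
    calc (∫⁻ x, (⨆ j ∈ Finset.Icc 1 N,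
        (‖∑ n ∈ Finset.Icc 1 j, b n • ψ n x‖₊ : ℝ≥0∞)) ^ 2 ∂μ)
        ≤ ∫⁻ x, ((m : ℝ≥0∞) + 1) * G x ∂μ := lintegral_mono hpt
      _ = ((m : ℝ≥0∞) + 1) * ∫⁻ x, G x ∂μ := lintegral_const_mul' _ _ (by finiteness)
      _ = ((m : ℝ≥0∞) + 1) ^ 2 * B := by rw [hGint]; ring
  -- Step 3: conclude
  have h12 : (0:ℝ) ≤ 1/2 := by norm_num
  refine (ENNReal.rpow_le_rpow hmain h12).trans ?_
  have hBr : B = ENNReal.ofReal (∑ n ∈ Finset.Icc 1 N, ‖b n‖ ^ 2) := by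
    rw [hB, ← ENNReal.ofReal_sum_of_nonneg (fun n _ => sq_nonneg _)]
  have hmc : ((m : ℝ≥0∞) + 1) = ENNReal.ofReal ((m : ℝ) + 1) := by
    rw [ENNReal.ofReal_add (by positivity) zero_le_one, ENNReal.ofReal_natCast,
      ENNReal.ofReal_one]
  rw [hBr, hmc, ← ENNReal.ofReal_pow (by positivity), ← ENNReal.ofReal_mul (by positivity),
    ENNReal.ofReal_rpow_of_nonneg (by positivity) h12]
  apply ENNReal.ofReal_le_ofReal
  set s := ∑ n ∈ Finset.Icc 1 N, ‖b n‖ ^ 2 with hs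
  have hs0 : 0 ≤ s := Finset.sum_nonneg fun n _ => sq_nonneg _
  have hsqrt : ((((m:ℝ) + 1) ^ 2) * s) ^ (1/2 : ℝ) = ((m:ℝ) + 1) * Real.sqrt s := by
    rw [← Real.sqrt_eq_rpow, Real.sqrt_mul (by positivity), Real.sqrt_sq (by positivity)]
  rw [hsqrt]
  have hlog : (m : ℝ) + 1 ≤ 2 + Real.logb 2 N := by
    rcases Nat.eq_zero_or_pos m with h0 | h1
    · rw [h0]
      have : (0:ℝ) ≤ Real.logb 2 N :=
        Real.logb_nonneg (by norm_num) (by exact_mod_cast hN)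
      push_cast
      linarith
    · have hN1 : 1 < N := by
        rcases Nat.lt_or_ge N 2 with hc | hc
        · exfalso
          have hNe : N = 1 := by omega
          rw [hm, hNe, Nat.clog_one_right] at h1
          omega
        · omega
      have hlt : 2 ^ (m - 1) < N := by
        rw [hm]
        exact Nat.pow_pred_clog_lt_self (by norm_num) hN1
      have hltR : ((2:ℝ) ^ (m - 1) : ℝ) < (N : ℝ) := by exact_mod_cast hlt
      have h2 : ((m:ℝ) - 1) < Real.logb 2 N := by
        have := Real.logb_lt_logb (b := 2) (by norm_num) (by positivity) hltR
        rw [Real.logb_pow, Real.logb_self_eq_one (by norm_num), mul_one] at this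
        have hcast : ((m - 1 : ℕ) : ℝ) = (m:ℝ) - 1 := by
          have : 1 ≤ m := h1
          push_cast [Nat.cast_sub this]
          ring
        linarith [hcast ▸ this]
      linarith
  exact mul_le_mul_of_nonneg_right hlog (Real.sqrt_nonneg s)
end

section
/- Let H be a real or complex Hilbert space, let r ≥ 1 be an integer, and let h_1, …, h_{2^r} be vectors in H. Then for every integer j with 1 ≤ j ≤ 2^r one has ‖Σ_{n=1}^j h_n‖_H² ≤ (r+1) · Σ_{k=0}^r Σ_{p=0}^{2^k − 1} ‖Σ_{n = p·2^{r−k}+1}^{(p+1)·2^{r−k}} h_n‖_H². -/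
open scoped BigOperators

private lemma tele_sum {H : Type*} [AddCommGroup H] (f : ℕ → H) (e : ℕ → ℕ)
    (hmono : ∀ k, e k ≤ e (k + 1)) (m : ℕ) :
    ∑ n ∈ Finset.Ioc (e 0) (e m), f n
      = ∑ k ∈ Finset.range m, ∑ n ∈ Finset.Ioc (e k) (e (k + 1)), f n := by
  induction m with
  | zero => simp
  | succ m ih =>
      rw [Finset.sum_range_succ, ← ih,
        Finset.sum_Ioc_consecutive f (monotone_nat_of_le_succ hmono (Nat.zero_le m)) (hmono m)]

/-- Dyadic-block inequality for partial sums of vectors in a Hilbert space. -/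
theorem dyadic_block_inequality
    {𝕜 : Type*} [RCLike 𝕜]
    {H : Type*} [NormedAddCommGroup H] [InnerProductSpace 𝕜 H]
    (r : ℕ) (hr : 1 ≤ r) (h : ℕ → H) (j : ℕ) (hj1 : 1 ≤ j) (hj2 : j ≤ 2 ^ r) :
    ‖∑ n ∈ Finset.Icc 1 j, h n‖ ^ 2 ≤
      ((r : ℝ) + 1) * ∑ k ∈ Finset.range (r + 1), ∑ p ∈ Finset.range (2 ^ k),
        ‖∑ n ∈ Finset.Icc (p * 2 ^ (r - k) + 1) ((p + 1) * 2 ^ (r - k)), h n‖ ^ 2 := by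
  -- rewrite all Icc's as Ioc's
  rw [show Finset.Icc 1 j = Finset.Ioc 0 j from Finset.Icc_add_one_left_eq_Ioc 0 j]
  simp only [Finset.Icc_add_one_left_eq_Ioc]
  set e : ℕ → ℕ := fun k => j / 2 ^ (r + 1 - k) * 2 ^ (r + 1 - k) with he
  have hmono : ∀ k, e k ≤ e (k + 1) := by
    intro k
    rcases le_or_gt (r + 1) k with hk | hk
    · have h1 : r + 1 - k = 0 := Nat.sub_eq_zero_of_le hk
      have h2 : r + 1 - (k + 1) = 0 := Nat.sub_eq_zero_of_le (le_trans hk (Nat.le_succ k))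
      simp [he, h1, h2]
    · have h1 : r + 1 - k = (r + 1 - (k + 1)) + 1 := by omega
      set s := r + 1 - (k + 1) with hs
      have : e k = (j / 2 ^ s / 2) * 2 * 2 ^ s := by
        simp only [he, h1]
        rw [pow_succ, Nat.div_div_eq_div_mul]
        ring_nf
      rw [this]
      have : j / 2 ^ s / 2 * 2 ≤ j / 2 ^ s := Nat.div_mul_le_self _ _
      exact Nat.mul_le_mul_right _ this
  have he0 : e 0 = 0 := by
    have : j / 2 ^ (r + 1) = 0 := Nat.div_eq_of_lt (lt_of_le_of_lt hj2 (by
      exact Nat.pow_lt_pow_right (by norm_num) (Nat.lt_succ_self r)))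
    simp [he, this]
  have heR : e (r + 1) = j := by simp [he]
  have hdecomp : ∑ n ∈ Finset.Ioc 0 j, h n
      = ∑ k ∈ Finset.range (r + 1), ∑ n ∈ Finset.Ioc (e k) (e (k + 1)), h n := by
    rw [← he0]; nth_rewrite 1 [← heR]; exact tele_sum h e hmono (r + 1)
  rw [hdecomp]
  -- piecewise bound
  have hpiece : ∀ k ∈ Finset.range (r + 1),
      ‖∑ n ∈ Finset.Ioc (e k) (e (k + 1)), h n‖ ^ 2 ≤
        ∑ p ∈ Finset.range (2 ^ k),
          ‖∑ n ∈ Finset.Ioc (p * 2 ^ (r - k)) ((p + 1) * 2 ^ (r - k)), h n‖ ^ 2 := by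
    intro k hk
    rw [Finset.mem_range] at hk
    have hkr : k ≤ r := Nat.lt_succ_iff.mp hk
    set s := r - k with hs
    have h1 : r + 1 - k = s + 1 := by omega
    have h2 : r + 1 - (k + 1) = s := by omega
    set q := j / 2 ^ s with hq
    set a := j / 2 ^ (s + 1) * 2 with ha
    have hek : e k = a * 2 ^ s := by
      simp only [he, h1, ha, pow_succ]; ring
    have hek1 : e (k + 1) = q * 2 ^ s := by simp only [he, h2, hq]
    have haq : a = q / 2 * 2 := by
      simp only [ha, hq, pow_succ, ← Nat.div_div_eq_div_mul]
    have h3 : a ≤ q := by rw [haq]; exact Nat.div_mul_le_self _ _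
    have h4 : q ≤ a + 1 := by omega
    rcases eq_or_lt_of_le h3 with hqa | hqa
    · -- empty piece
      rw [hek, hek1, ← hqa]
      simp only [Finset.Ioc_self, Finset.sum_empty, norm_zero]
      have : (0:ℝ) ≤ ∑ p ∈ Finset.range (2 ^ k),
          ‖∑ n ∈ Finset.Ioc (p * 2 ^ (r - k)) ((p + 1) * 2 ^ (r - k)), h n‖ ^ 2 :=
        Finset.sum_nonneg fun i _ => by positivity
      simpa using this
    · have hqa' : q = a + 1 := by omega
      have hle : q * 2 ^ s ≤ j := Nat.div_mul_le_self _ _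
      have ha2k : a < 2 ^ k := by
        have : q * 2 ^ s ≤ 2 ^ k * 2 ^ s := by
          calc q * 2 ^ s ≤ j := hle
          _ ≤ 2 ^ r := hj2
          _ = 2 ^ k * 2 ^ s := by rw [← pow_add]; congr 1; omega
        have := Nat.le_of_mul_le_mul_right this (Nat.pow_pos (n := s) (by norm_num))
        omega
      have := Finset.single_le_sum
        (f := fun p => ‖∑ n ∈ Finset.Ioc (p * 2 ^ (r - k)) ((p + 1) * 2 ^ (r - k)), h n‖ ^ 2)
        (fun i _ => by positivity) (Finset.mem_range.mpr ha2k)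
      calc ‖∑ n ∈ Finset.Ioc (e k) (e (k + 1)), h n‖ ^ 2
          = ‖∑ n ∈ Finset.Ioc (a * 2 ^ (r - k)) ((a + 1) * 2 ^ (r - k)), h n‖ ^ 2 := by
            rw [hek, hek1, hqa', ← hs]
        _ ≤ _ := this
  -- Cauchy–Schwarz step
  calc ‖∑ k ∈ Finset.range (r + 1), ∑ n ∈ Finset.Ioc (e k) (e (k + 1)), h n‖ ^ 2
      ≤ (∑ k ∈ Finset.range (r + 1), ‖∑ n ∈ Finset.Ioc (e k) (e (k + 1)), h n‖) ^ 2 := by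
        apply pow_le_pow_left₀ (norm_nonneg _) (norm_sum_le _ _)
    _ ≤ (Finset.range (r + 1)).card *
          ∑ k ∈ Finset.range (r + 1), ‖∑ n ∈ Finset.Ioc (e k) (e (k + 1)), h n‖ ^ 2 :=
        sq_sum_le_card_mul_sum_sq
    _ = ((r : ℝ) + 1) * ∑ k ∈ Finset.range (r + 1), ‖∑ n ∈ Finset.Ioc (e k) (e (k + 1)), h n‖ ^ 2 := by
        rw [Finset.card_range]; push_cast; ring
    _ ≤ _ := by
        apply mul_le_mul_of_nonneg_left _ (by positivity)
        exact Finset.sum_le_sum hpiece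
end

section
/- Let (a_n)_{n=1}^∞ be a sequence of scalars with Σ_{n=1}^∞ |a_n|² (log₂(n+1))² < ∞, and let (φ_n)_{n=1}^∞ be an orthonormal system in L₂(X, dμ; H) with fixed strongly measurable representatives. Then for μ-almost every x ∈ X one has Σ_{k=0}^∞ ‖Σ_{n=2^k}^{2^{k+1}−1} a_n φ_n(x)‖_H < ∞; in particular, the dyadic subsequence of partial sums S_{2^k}(x) := Σ_{n=1}^{2^k} a_n φ_n(x) converges in the norm of H for μ-almost every x ∈ X. -/
open MeasureTheory Filter
open scoped ENNReal NNReal BigOperators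

section Aux

variable {α : Type*} {E : Type*} [MeasurableSpace α] {μ : Measure α} [NormedAddCommGroup E]

/-- If the `L²` norms of a sequence of functions are summable (in `ℝ≥0∞`), then the norms are
pointwise summable almost everywhere. -/
lemma aux_ae_summable_norm (f : ℕ → α → E)
    (hf : ∀ k, AEStronglyMeasurable (f k) μ)
    (hC : (∑' k, eLpNorm (f k) 2 μ) ≠ ∞) :
    ∀ᵐ x ∂μ, Summable fun k => ‖f k x‖ := by
  set u : ℕ → α → ℝ≥0∞ := fun k x => (‖f k x‖₊ : ℝ≥0∞) with hu_def
  have hum : ∀ k, AEMeasurable (u k) μ := fun k => (hf k).enorm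
  have h2 : ∀ k, eLpNorm (f k) 2 μ = (∫⁻ x, u k x ^ (2 : ℝ) ∂μ) ^ (1 / 2 : ℝ) := by
    intro k
    rw [eLpNorm_eq_lintegral_rpow_enorm_toReal two_ne_zero ENNReal.ofNat_ne_top]
    norm_num [hu_def, enorm_eq_nnnorm]
  have key : ∀ N : ℕ, (∫⁻ x, (∑ k ∈ Finset.range N, u k x) ^ (2 : ℝ) ∂μ) ^ (1 / 2 : ℝ)
      ≤ ∑ k ∈ Finset.range N, eLpNorm (f k) 2 μ := by
    intro N
    induction N with
    | zero =>
        simp only [Finset.range_zero, Finset.sum_empty]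
        rw [show (fun _ : α => (0 : ℝ≥0∞) ^ (2 : ℝ)) = fun _ => (0 : ℝ≥0∞) from
          funext fun _ => ENNReal.zero_rpow_of_pos (by norm_num), lintegral_zero,
          ENNReal.zero_rpow_of_pos (by norm_num)]
    | succ N ih =>
        simp_rw [Finset.sum_range_succ]
        refine le_trans (ENNReal.lintegral_Lp_add_le
          (Finset.aemeasurable_fun_sum _ fun i _ => hum i) (hum N) one_le_two) ?_
        rw [h2 N]
        exact add_le_add_left ih _
  have key2 : ∀ N : ℕ, (∫⁻ x, (∑ k ∈ Finset.range N, u k x) ^ (2 : ℝ) ∂μ)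
      ≤ (∑' k, eLpNorm (f k) 2 μ) ^ (2 : ℝ) := by
    intro N
    have h1 : (∫⁻ x, (∑ k ∈ Finset.range N, u k x) ^ (2 : ℝ) ∂μ) ^ (1 / 2 : ℝ)
        ≤ ∑' k, eLpNorm (f k) 2 μ := (key N).trans (ENNReal.sum_le_tsum _)
    calc (∫⁻ x, (∑ k ∈ Finset.range N, u k x) ^ (2 : ℝ) ∂μ)
        = ((∫⁻ x, (∑ k ∈ Finset.range N, u k x) ^ (2 : ℝ) ∂μ) ^ (1 / 2 : ℝ)) ^ (2 : ℝ) := by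
          rw [← ENNReal.rpow_mul]; norm_num
      _ ≤ (∑' k, eLpNorm (f k) 2 μ) ^ (2 : ℝ) := ENNReal.rpow_le_rpow h1 (by norm_num)
  have h3 : (∫⁻ x, (∑' k, u k x) ^ (2 : ℝ) ∂μ) ≤ (∑' k, eLpNorm (f k) 2 μ) ^ (2 : ℝ) := by
    have ht : ∀ x, (∑' k, u k x) ^ (2 : ℝ)
        = atTop.liminf fun n => (∑ k ∈ Finset.range n, u k x) ^ (2 : ℝ) := by
      intro x
      rw [ENNReal.tsum_eq_liminf_sum_nat]
      have h_rpow_mono := ENNReal.strictMono_rpow_of_pos (show (0 : ℝ) < 2 by norm_num)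
      have h_rpow_surj := (ENNReal.rpow_left_bijective (show (2 : ℝ) ≠ 0 by norm_num)).2
      refine (h_rpow_mono.orderIsoOfSurjective _ h_rpow_surj).liminf_apply ?_ ?_ ?_ ?_
      all_goals isBoundedDefault
    simp_rw [ht]
    refine (lintegral_liminf_le' fun n =>
      (Finset.aemeasurable_fun_sum _ fun i _ => hum i).pow_const _).trans ?_
    exact liminf_le_of_frequently_le' (Frequently.of_forall key2)
  have h4 : ∀ᵐ x ∂μ, (∑' k, u k x) ^ (2 : ℝ) < ∞ :=
    ae_lt_top' ((AEMeasurable.ennreal_tsum hum).pow_const _)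
      (h3.trans_lt (ENNReal.rpow_lt_top_of_nonneg (by norm_num) hC)).ne
  refine h4.mono fun x hx => ?_
  have hne : (∑' k, u k x) ≠ ∞ := by
    intro h
    rw [h, ENNReal.top_rpow_of_pos (by norm_num : (0 : ℝ) < 2)] at hx
    exact lt_irrefl _ hx
  have hsumm := ENNReal.tsum_coe_ne_top_iff_summable.mp hne
  simpa using NNReal.summable_coe.mpr hsumm

end Aux

section InnerAux

variable {X : Type*} [MeasurableSpace X] {μ : Measure X} {𝕜 : Type*} [RCLike 𝕜]
  {H : Type*} [NormedAddCommGroup H] [InnerProductSpace 𝕜 H]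

local notation "⟪" x ", " y "⟫" => @inner 𝕜 _ _ x y

lemma aux_integrable_inner {f g : X → H} (hf : MemLp f 2 μ) (hg : MemLp g 2 μ) :
    Integrable (fun x => ⟪f x, g x⟫) μ := by
  have h1 := L2.integrable_inner (𝕜 := 𝕜) (hf.toLp f) (hg.toLp g)
  refine h1.congr ?_
  filter_upwards [hf.coeFn_toLp, hg.coeFn_toLp] with x h1x h2x
  rw [h1x, h2x]

/-- The `L²` norm of a finite orthonormal combination. -/
lemma aux_block (a : ℕ → 𝕜) (φ : ℕ → X → H)
    (hmem : ∀ n, 1 ≤ n → MemLp (φ n) 2 μ)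
    (horth : ∀ n m, 1 ≤ n → 1 ≤ m →
      ∫ x, ⟪φ n x, φ m x⟫ ∂μ = if n = m then (1 : 𝕜) else 0)
    (s : Finset ℕ) (hs : ∀ n ∈ s, 1 ≤ n) :
    MemLp (fun x => ∑ n ∈ s, a n • φ n x) 2 μ ∧
      eLpNorm (fun x => ∑ n ∈ s, a n • φ n x) 2 μ
        = ENNReal.ofReal (Real.sqrt (∑ n ∈ s, ‖a n‖ ^ 2)) := by
  have hmem' : ∀ n ∈ s, MemLp (fun x => a n • φ n x) 2 μ :=
    fun n hn => (hmem n (hs n hn)).const_smul (a n)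
  have hg : MemLp (fun x => ∑ n ∈ s, a n • φ n x) 2 μ := memLp_finset_sum s hmem'
  set g : X → H := fun x => ∑ n ∈ s, a n • φ n x with hg_def
  have hint : ∀ n ∈ s, ∀ m ∈ s,
      Integrable (fun x => (starRingEnd 𝕜) (a n) * a m * ⟪φ n x, φ m x⟫) μ :=
    fun n hn m hm =>
      (aux_integrable_inner (hmem n (hs n hn)) (hmem m (hs m hm))).const_mul _
  have hexp : ∀ x, ⟪g x, g x⟫
      = ∑ n ∈ s, ∑ m ∈ s, (starRingEnd 𝕜) (a n) * a m * ⟪φ n x, φ m x⟫ := by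
    intro x
    rw [hg_def]
    simp only
    rw [sum_inner]
    refine Finset.sum_congr rfl fun n _ => ?_
    rw [inner_sum]
    refine Finset.sum_congr rfl fun m _ => ?_
    rw [inner_smul_left, inner_smul_right]
    ring
  have hii : ∫ x, ⟪g x, g x⟫ ∂μ = ((∑ n ∈ s, ‖a n‖ ^ 2 : ℝ) : 𝕜) := by
    calc ∫ x, ⟪g x, g x⟫ ∂μ
        = ∫ x, ∑ n ∈ s, ∑ m ∈ s, (starRingEnd 𝕜) (a n) * a m * ⟪φ n x, φ m x⟫ ∂μ := by
          simp_rw [hexp]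
      _ = ∑ n ∈ s, ∑ m ∈ s, ∫ x, (starRingEnd 𝕜) (a n) * a m * ⟪φ n x, φ m x⟫ ∂μ := by
          rw [integral_finset_sum s fun n hn => integrable_finset_sum s fun m hm => hint n hn m hm]
          exact Finset.sum_congr rfl fun n hn => integral_finset_sum s fun m hm => hint n hn m hm
      _ = ∑ n ∈ s, ∑ m ∈ s, (starRingEnd 𝕜) (a n) * a m * (if n = m then (1 : 𝕜) else 0) := by
          refine Finset.sum_congr rfl fun n hn => Finset.sum_congr rfl fun m hm => ?_
          rw [integral_const_mul, horth n m (hs n hn) (hs m hm)]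
      _ = ∑ n ∈ s, (starRingEnd 𝕜) (a n) * a n := by
          refine Finset.sum_congr rfl fun n hn => ?_
          simp only [mul_ite, mul_one, mul_zero]
          rw [Finset.sum_ite_eq s n (fun m => (starRingEnd 𝕜) (a n) * a m), if_pos hn]
      _ = ((∑ n ∈ s, ‖a n‖ ^ 2 : ℝ) : 𝕜) := by
          push_cast
          exact Finset.sum_congr rfl fun n _ => RCLike.conj_mul (a n)
  have hn2 : ∫ x, ‖g x‖ ^ 2 ∂μ = ∑ n ∈ s, ‖a n‖ ^ 2 := by
    have hcast : ((∫ x, ‖g x‖ ^ 2 ∂μ : ℝ) : 𝕜) = ((∑ n ∈ s, ‖a n‖ ^ 2 : ℝ) : 𝕜) := by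
      rw [← integral_ofReal]
      rw [show (fun x => ((‖g x‖ ^ 2 : ℝ) : 𝕜)) = fun x => ⟪g x, g x⟫ from
        funext fun x => by rw [inner_self_eq_norm_sq_to_K]; push_cast; ring]
      exact hii
    exact_mod_cast hcast
  refine ⟨hg, ?_⟩
  rw [hg.eLpNorm_eq_integral_rpow_norm two_ne_zero ENNReal.ofNat_ne_top]
  congr 1
  rw [Real.sqrt_eq_rpow]
  have htwo : ((2 : ℝ≥0∞).toReal) = (2 : ℝ) := by norm_num
  rw [htwo]
  congr 1
  · rw [← hn2]
    refine integral_congr_ae (Eventually.of_forall fun x => ?_)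
    simp only
    rw [Real.rpow_two]
  · norm_num

end InnerAux

section FinsetAux

variable {M : Type*} [AddCommMonoid M]

lemma aux_Icc_Ioc (j : ℕ) : Finset.Icc 1 j = Finset.Ioc 0 j := Finset.Icc_add_one_left_eq_Ioc 0 j

lemma aux_Icc_eq_Ioc (p q : ℕ) (hp : 1 ≤ p) : Finset.Icc p q = Finset.Ioc (p - 1) q := by
  ext n
  simp only [Finset.mem_Icc, Finset.mem_Ioc]
  omega

lemma aux_block_Ioc (k : ℕ) :
    Finset.Icc (2 ^ k) (2 ^ (k + 1) - 1) = Finset.Ioc (2 ^ k - 1) (2 ^ (k + 1) - 1) :=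
  aux_Icc_eq_Ioc _ _ Nat.one_le_two_pow

lemma aux_dyadic_sum (f : ℕ → M) (K : ℕ) :
    ∑ k ∈ Finset.range K, ∑ n ∈ Finset.Icc (2 ^ k) (2 ^ (k + 1) - 1), f n
      = ∑ n ∈ Finset.Icc 1 (2 ^ K - 1), f n := by
  induction K with
  | zero => simp
  | succ K ih =>
      rw [Finset.sum_range_succ, ih, aux_Icc_Ioc, aux_Icc_Ioc, aux_block_Ioc]
      exact Finset.sum_Ioc_consecutive f (Nat.zero_le _)
        (Nat.sub_le_sub_right (Nat.pow_le_pow_right (by norm_num) (Nat.le_succ K)) 1)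

lemma aux_Icc_split (f : ℕ → M) (K : ℕ) :
    ∑ n ∈ Finset.Icc 1 (2 ^ K), f n
      = (∑ n ∈ Finset.Icc 1 (2 ^ K - 1), f n) + f (2 ^ K) := by
  rw [aux_Icc_Ioc, aux_Icc_Ioc]
  rw [← Finset.sum_Ioc_consecutive f (Nat.zero_le (2 ^ K - 1)) (Nat.sub_le _ 1)]
  congr 1
  have h : Finset.Ioc (2 ^ K - 1) (2 ^ K) = {2 ^ K} := by
    have h1 : (1 : ℕ) ≤ 2 ^ K := Nat.one_le_two_pow
    ext n
    simp only [Finset.mem_Ioc, Finset.mem_singleton]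
    omega
  rw [h, Finset.sum_singleton]

end FinsetAux

lemma aux_sqrt_amgm (x y : ℝ) (hx : 0 ≤ x) (hy : 0 ≤ y) :
    Real.sqrt (x * y) ≤ (x + y) / 2 := by
  rw [Real.sqrt_mul hx]
  nlinarith [Real.sq_sqrt hx, Real.sq_sqrt hy, Real.sqrt_nonneg x, Real.sqrt_nonneg y,
    sq_nonneg (Real.sqrt x - Real.sqrt y)]

set_option maxHeartbeats 2000000 in
/-- A.e. absolute summability of the dyadic blocks, and a.e. convergence of the dyadic
subsequence of partial sums. -/
theorem dyadic_blocks_ae_summable_and_dyadic_convergence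
    {X : Type*} [MeasurableSpace X] (μ : Measure X)
    {𝕜 : Type*} [RCLike 𝕜]
    {H : Type*} [NormedAddCommGroup H] [InnerProductSpace 𝕜 H] [CompleteSpace H]
    (a : ℕ → 𝕜) (φ : ℕ → X → H)
    (hmem : ∀ n, 1 ≤ n → MemLp (φ n) 2 μ)
    (horth : ∀ n m, 1 ≤ n → 1 ≤ m →
      ∫ x, (inner 𝕜 (φ n x) (φ m x) : 𝕜) ∂μ = if n = m then (1 : 𝕜) else 0)
    (hL : Summable fun n : ℕ => ‖a (n + 1)‖ ^ 2 * (Real.logb 2 ((n : ℝ) + 2)) ^ 2) :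
    ∀ᵐ x ∂μ,
      (Summable fun k : ℕ =>
        ‖∑ n ∈ Finset.Icc (2 ^ k) (2 ^ (k + 1) - 1), a n • φ n x‖) ∧
      ∃ l : H, Tendsto (fun k : ℕ => ∑ n ∈ Finset.Icc 1 (2 ^ k), a n • φ n x)
        atTop (nhds l) := by
  -- The weighted coefficient sequence
  set c : ℕ → ℝ := fun n => ‖a n‖ ^ 2 * (Real.logb 2 ((n : ℝ) + 1)) ^ 2 with hc_def
  have hc_nonneg : ∀ n, 0 ≤ c n := fun n => mul_nonneg (sq_nonneg _) (sq_nonneg _)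
  have hc : Summable fun n : ℕ => c (n + 1) := by
    refine hL.congr fun n => ?_
    simp only [hc_def]
    push_cast
    ring_nf
  -- block sums of squared coefficients
  set b : ℕ → ℝ := fun k => ∑ n ∈ Finset.Icc (2 ^ k) (2 ^ (k + 1) - 1), ‖a n‖ ^ 2 with hb_def
  set B : ℕ → ℝ := fun k => ∑ n ∈ Finset.Icc (2 ^ k) (2 ^ (k + 1) - 1), c n with hB_def
  have hb_nonneg : ∀ k, 0 ≤ b k := fun k => Finset.sum_nonneg fun n _ => sq_nonneg _
  have hB_nonneg : ∀ k, 0 ≤ B k := fun k => Finset.sum_nonneg fun n _ => hc_nonneg n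
  have hBsum : Summable B := by
    apply summable_of_sum_range_le hB_nonneg (c := ∑' n, c (n + 1))
    intro K
    rw [show ∑ k ∈ Finset.range K, B k
        = ∑ n ∈ Finset.Icc 1 (2 ^ K - 1), c n from aux_dyadic_sum c K]
    rw [← Finset.Ico_add_one_right_eq_Icc, Finset.sum_Ico_eq_sum_range]
    have h1 : ∀ i, c (1 + i) = c (i + 1) := fun i => by rw [add_comm]
    simp_rw [h1]
    exact Summable.sum_le_tsum _ (fun i _ => hc_nonneg _) hc
  have hkb : ∀ k : ℕ, (k : ℝ) ^ 2 * b k ≤ B k := by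
    intro k
    rw [hb_def, hB_def]
    simp only
    rw [Finset.mul_sum]
    refine Finset.sum_le_sum fun n hn => ?_
    rw [hc_def]
    simp only
    rw [mul_comm ((k : ℝ) ^ 2) _]
    refine mul_le_mul_of_nonneg_left ?_ (sq_nonneg _)
    have hn1 : 2 ^ k ≤ n := (Finset.mem_Icc.mp hn).1
    have hn1' : ((2 : ℝ)) ^ k ≤ (n : ℝ) := by exact_mod_cast hn1
    have hklog : (k : ℝ) ≤ Real.logb 2 ((n : ℝ) + 1) := by
      have h2k : Real.logb 2 ((2 : ℝ) ^ k) = (k : ℝ) := by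
        rw [Real.logb_pow, Real.logb_self_eq_one (by norm_num), mul_one]
      rw [← h2k]
      exact Real.logb_le_logb_of_le (by norm_num : (1:ℝ) < 2) (by positivity) (by linarith)
    have hk0 : (0 : ℝ) ≤ (k : ℝ) := Nat.cast_nonneg k
    exact pow_le_pow_left₀ hk0 hklog 2
  -- summability of `sqrt (b k)`
  have hsqrtb : Summable fun k => Real.sqrt (b k) := by
    have hRHS : Summable fun k : ℕ => (1 / ((k + 1 : ℕ) : ℝ) ^ 2 + B (k + 1)) / 2 := by
      have h1 : Summable (fun n : ℕ => B (n + 1)) :=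
        (_root_.summable_nat_add_iff (f := B) 1).mpr hBsum
      have h2 : Summable (fun n : ℕ => 1 / ((n + 1 : ℕ) : ℝ) ^ 2) := by
        have := (_root_.summable_nat_add_iff (f := fun n : ℕ => 1 / (n : ℝ) ^ 2) 1).mpr
          (Real.summable_one_div_nat_pow.mpr one_lt_two)
        exact_mod_cast this
      exact (h2.add h1).div_const 2
    have hshift : Summable fun k : ℕ => Real.sqrt (b (k + 1)) := by
      refine Summable.of_nonneg_of_le (fun k => Real.sqrt_nonneg _) (fun k => ?_) hRHS
      have hk0 : (((k + 1 : ℕ) : ℝ)) ≠ 0 := by positivity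
      have hbk : b (k + 1)
          = (1 / ((k + 1 : ℕ) : ℝ) ^ 2) * (((k + 1 : ℕ) : ℝ) ^ 2 * b (k + 1)) := by
        field_simp
      calc Real.sqrt (b (k + 1))
          = Real.sqrt ((1 / ((k + 1 : ℕ) : ℝ) ^ 2) * (((k + 1 : ℕ) : ℝ) ^ 2 * b (k + 1))) := by
            rw [← hbk]
        _ ≤ (1 / ((k + 1 : ℕ) : ℝ) ^ 2 + ((k + 1 : ℕ) : ℝ) ^ 2 * b (k + 1)) / 2 :=
            aux_sqrt_amgm _ _ (by positivity) (mul_nonneg (sq_nonneg _) (hb_nonneg _))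
        _ ≤ (1 / ((k + 1 : ℕ) : ℝ) ^ 2 + B (k + 1)) / 2 := by
            have := hkb (k + 1)
            push_cast at this ⊢
            linarith
    exact (_root_.summable_nat_add_iff (f := fun k => Real.sqrt (b k)) 1).mp hshift
  -- summability of `‖a (2^k)‖`
  have hmem2 : ∀ k : ℕ, (2 ^ k) ∈ Finset.Icc (2 ^ k) (2 ^ (k + 1) - 1) := by
    intro k
    refine Finset.mem_Icc.mpr ⟨le_rfl, ?_⟩
    have h1 : (1 : ℕ) ≤ 2 ^ k := Nat.one_le_two_pow
    have h2 : 2 ^ (k + 1) = 2 ^ k * 2 := pow_succ 2 k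
    omega
  have ha2 : Summable fun k => ‖a (2 ^ k)‖ := by
    refine Summable.of_nonneg_of_le (fun k => norm_nonneg _) (fun k => ?_) hsqrtb
    have hle : ‖a (2 ^ k)‖ ^ 2 ≤ b k :=
      Finset.single_le_sum (f := fun n => ‖a n‖ ^ 2) (fun n _ => sq_nonneg _) (hmem2 k)
    calc ‖a (2 ^ k)‖ = Real.sqrt (‖a (2 ^ k)‖ ^ 2) := (Real.sqrt_sq (norm_nonneg _)).symm
      _ ≤ Real.sqrt (b k) := Real.sqrt_le_sqrt hle
  -- `L²` data for blocks and singletons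
  have hone : ∀ k : ℕ, (1 : ℕ) ≤ 2 ^ k := fun k => Nat.one_le_two_pow
  have hDmem : ∀ k : ℕ,
      MemLp (fun x => ∑ n ∈ Finset.Icc (2 ^ k) (2 ^ (k + 1) - 1), a n • φ n x) 2 μ ∧
        eLpNorm (fun x => ∑ n ∈ Finset.Icc (2 ^ k) (2 ^ (k + 1) - 1), a n • φ n x) 2 μ
          = ENNReal.ofReal (Real.sqrt (b k)) := by
    intro k
    exact aux_block a φ hmem horth (Finset.Icc (2 ^ k) (2 ^ (k + 1) - 1))
      (fun n hn => le_trans (hone k) (Finset.mem_Icc.mp hn).1)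
  have hPmem : ∀ k : ℕ,
      MemLp (fun x => ∑ n ∈ ({2 ^ k} : Finset ℕ), a n • φ n x) 2 μ ∧
        eLpNorm (fun x => ∑ n ∈ ({2 ^ k} : Finset ℕ), a n • φ n x) 2 μ
          = ENNReal.ofReal ‖a (2 ^ k)‖ := by
    intro k
    have h := aux_block a φ hmem horth ({2 ^ k} : Finset ℕ)
      (fun n hn => by rw [Finset.mem_singleton] at hn; subst hn; exact hone k)
    refine ⟨h.1, ?_⟩
    rw [h.2, Finset.sum_singleton, Real.sqrt_sq (norm_nonneg _)]
  have hDsum : ∀ᵐ x ∂μ, Summable fun k =>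
      ‖∑ n ∈ Finset.Icc (2 ^ k) (2 ^ (k + 1) - 1), a n • φ n x‖ := by
    apply aux_ae_summable_norm _ (fun k => (hDmem k).1.aestronglyMeasurable)
    have heq : (fun k => eLpNorm
        (fun x => ∑ n ∈ Finset.Icc (2 ^ k) (2 ^ (k + 1) - 1), a n • φ n x) 2 μ)
        = fun k => ENNReal.ofReal (Real.sqrt (b k)) := funext fun k => (hDmem k).2
    rw [show (∑' k, eLpNorm
        (fun x => ∑ n ∈ Finset.Icc (2 ^ k) (2 ^ (k + 1) - 1), a n • φ n x) 2 μ)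
        = ∑' k, ENNReal.ofReal (Real.sqrt (b k)) from by rw [heq]]
    rw [← ENNReal.ofReal_tsum_of_nonneg (fun k => Real.sqrt_nonneg _) hsqrtb]
    exact ENNReal.ofReal_ne_top
  have hPsum : ∀ᵐ x ∂μ, Summable fun k =>
      ‖∑ n ∈ ({2 ^ k} : Finset ℕ), a n • φ n x‖ := by
    apply aux_ae_summable_norm _ (fun k => (hPmem k).1.aestronglyMeasurable)
    have heq : (fun k => eLpNorm
        (fun x => ∑ n ∈ ({2 ^ k} : Finset ℕ), a n • φ n x) 2 μ)
        = fun k => ENNReal.ofReal ‖a (2 ^ k)‖ := funext fun k => (hPmem k).2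
    rw [show (∑' k, eLpNorm
        (fun x => ∑ n ∈ ({2 ^ k} : Finset ℕ), a n • φ n x) 2 μ)
        = ∑' k, ENNReal.ofReal ‖a (2 ^ k)‖ from by rw [heq]]
    rw [← ENNReal.ofReal_tsum_of_nonneg (fun k => norm_nonneg _) ha2]
    exact ENNReal.ofReal_ne_top
  -- conclusion
  filter_upwards [hDsum, hPsum] with x hx1 hx2
  refine ⟨hx1, ?_⟩
  have hx2' : Summable fun k => ‖a (2 ^ k) • φ (2 ^ k) x‖ := by
    refine hx2.congr fun k => ?_
    rw [Finset.sum_singleton]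
  have hsum : Summable fun k => ∑ n ∈ Finset.Icc (2 ^ k) (2 ^ (k + 1) - 1), a n • φ n x :=
    Summable.of_norm hx1
  have h0 : Tendsto (fun k => a (2 ^ k) • φ (2 ^ k) x) atTop (nhds (0 : H)) := by
    exact tendsto_zero_iff_norm_tendsto_zero.mpr hx2'.tendsto_atTop_zero
  have hps := hsum.hasSum.tendsto_sum_nat
  have hiden : ∀ K : ℕ, ∑ n ∈ Finset.Icc 1 (2 ^ K), a n • φ n x
      = (∑ k ∈ Finset.range K, ∑ n ∈ Finset.Icc (2 ^ k) (2 ^ (k + 1) - 1), a n • φ n x)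
        + a (2 ^ K) • φ (2 ^ K) x := by
    intro K
    rw [aux_Icc_split (fun n => a n • φ n x) K, aux_dyadic_sum (fun n => a n • φ n x) K]
  refine ⟨(∑' k, ∑ n ∈ Finset.Icc (2 ^ k) (2 ^ (k + 1) - 1), a n • φ n x), ?_⟩
  have hcomb := hps.add h0
  rw [add_zero] at hcomb
  exact Tendsto.congr (fun K => (hiden K).symm) hcomb
end
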